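/- arXiv:2405.18183 — 4 statements merged into one kernel-verified Lean document; each statement's English description precedes it below -/
import Mathlib

section
/- Let ξ^s and ξ^b be independent centered random variables supported in [−C,C] with densities f^s, f^b bounded by L, let θ^s, θ^b ∈ ℝ^d with ‖θ^s‖, ‖θ^b‖ ≤ A, let x ∈ ℝ^d with ‖x‖ ≤ B, and set P = C + AB. Define s = xᵀθ^s + ξ^s, b = xᵀθ^b + ξ^b, and EGFT(x,p) = E[1{s ≤ p}1{p ≤ b}(b − s)]. Then, for every p, EGFT(x,p) = I(δ^b)·F^s(δ^s) + J(δ^s)·D^b(δ^b), where δ^s = p − xᵀθ^s, δ^b = p − xᵀθ^b, F^s is the c.d.f. of ξ^s, D^b(u) = P(ξ^b ≥ u), I(δ) = ∫_δ^C D^b(u) du, and J(δ) = ∫_{−C}^δ F^s(u) du. -/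
open MeasureTheory ProbabilityTheory Set
open scoped InnerProductSpace

set_option maxHeartbeats 1000000

open MeasureTheory ProbabilityTheory Set
open scoped InnerProductSpace

lemma law_null {Ω : Type*} [MeasurableSpace Ω] (Pr : Measure Ω)
    (ξ : Ω → ℝ) (hm : Measurable ξ) (f : ℝ → ℝ)
    (hlaw : Measure.map ξ Pr = volume.withDensity (fun u => ENNReal.ofReal (f u)))
    {s : Set ℝ} (hs : MeasurableSet s) (hf : ∀ u ∈ s, f u = 0) :
    Pr (ξ ⁻¹' s) = 0 := by
  rw [← Measure.map_apply hm hs, hlaw, withDensity_apply _ hs,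
    setLIntegral_congr_fun (g := fun _ => 0) hs (fun u hu => by
      simp [hf u hu]), lintegral_zero]

lemma aux_tail {Ω : Type*} [MeasurableSpace Ω] (Pr : Measure Ω) [IsProbabilityMeasure Pr]
    (C : ℝ) (ξ : Ω → ℝ) (hm : Measurable ξ) (f : ℝ → ℝ)
    (hsupp : ∀ u, u ∉ Icc (-C) C → f u = 0)
    (hlaw : Measure.map ξ Pr = volume.withDensity (fun u => ENNReal.ofReal (f u)))
    (D : ℝ → ℝ) (hD : ∀ u, D u = (Pr {ω | u ≤ ξ ω}).toReal) (δ : ℝ) :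
    ∫ ω, (if δ ≤ ξ ω then ξ ω - δ else 0) ∂Pr = ∫ u in δ..C, D u := by
  -- D vanishes above C
  have hD0 : ∀ u, C ≤ u → D u = 0 := by
    intro u hu
    have : Pr (ξ ⁻¹' Ici u) = 0 := by
      rw [← Measure.map_apply hm measurableSet_Ici, hlaw, withDensity_apply _ measurableSet_Ici,
        ← Measure.restrict_congr_set (Ioi_ae_eq_Ici (a := u)),
        setLIntegral_congr_fun (g := fun _ => 0) measurableSet_Ioi (fun v hv => by
          have : f v = 0 := hsupp v (by
            intro hmem
            exact absurd hmem.2 (not_le.mpr (lt_of_le_of_lt hu hv)))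
          simp [this]), lintegral_zero]
    rw [hD u]
    have : {ω | u ≤ ξ ω} = ξ ⁻¹' Ici u := rfl
    rw [this, ‹Pr (ξ ⁻¹' Ici u) = 0›]
    simp
  -- a.e. bound
  have hbound : ∀ᵐ ω ∂Pr, ξ ω ∈ Icc (-C) C := by
    have h0 : Pr (ξ ⁻¹' (Icc (-C) C)ᶜ) = 0 :=
      law_null Pr ξ hm f hlaw measurableSet_Icc.compl (fun u hu => hsupp u hu)
    rw [ae_iff]
    exact h0
  -- rewrite integrand as max
  have hmax : (fun ω => if δ ≤ ξ ω then ξ ω - δ else 0) = fun ω => max (ξ ω - δ) 0 := by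
    funext ω
    by_cases h : δ ≤ ξ ω
    · rw [if_pos h, max_eq_left (by linarith)]
    · rw [if_neg h, max_eq_right (by push_neg at h; linarith)]
  rw [hmax]
  have hintg : Integrable (fun ω => max (ξ ω - δ) 0) Pr := by
    refine Integrable.mono' (integrable_const (max (C - δ) 0))
      (((hm.sub measurable_const).max measurable_const).aestronglyMeasurable) ?_
    filter_upwards [hbound] with ω hω
    rw [Real.norm_eq_abs, abs_of_nonneg (le_max_right _ _)]
    exact max_le_max (by linarith [hω.2]) le_rfl
  rw [hintg.integral_eq_integral_meas_le (Filter.Eventually.of_forall fun ω => le_max_right _ _)]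
  have hcongr : ∫ t in Ioi (0:ℝ), (Pr {ω | t ≤ max (ξ ω - δ) 0}).toReal
      = ∫ t in Ioi (0:ℝ), D (δ + t) := by
    refine setIntegral_congr_fun measurableSet_Ioi fun t ht => ?_
    rw [hD]
    congr 2
    ext ω
    simp only [mem_setOf_eq, le_max_iff]
    constructor
    · rintro (h | h)
      · linarith
      · exact absurd h (not_le.mpr ht)
    · intro h; left; linarith
  simp only [← measureReal_def] at hcongr
  rw [hcongr]
  have hshrink : ∫ t in Ioi (0:ℝ), D (δ + t) = ∫ t in Ioc (0:ℝ) (max (C - δ) 0), D (δ + t) := by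
    refine (setIntegral_eq_of_subset_of_ae_diff_eq_zero (f := fun t => D (δ + t))
      (μ := volume) (s := Ioc (0:ℝ) (max (C - δ) 0)) (t := Ioi (0:ℝ)) nullMeasurableSet_Ioi
      Ioc_subset_Ioi_self ?_)
    refine Filter.Eventually.of_forall fun t ht => ?_
    obtain ⟨ht1, ht2⟩ := ht
    have hMt : max (C - δ) 0 < t := by
      by_contra h
      exact ht2 ⟨ht1, not_lt.mp h⟩
    exact hD0 _ (by have := le_max_left (C - δ) 0; linarith)
  rw [hshrink, ← intervalIntegral.integral_of_le (le_max_right (C - δ) 0),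
    intervalIntegral.integral_comp_add_left D δ, add_zero]
  by_cases hCδ : δ ≤ C
  · rw [max_eq_left (by linarith : (0:ℝ) ≤ C - δ), add_sub_cancel]
  · push_neg at hCδ
    rw [max_eq_right (by linarith : C - δ ≤ (0:ℝ)), add_zero, intervalIntegral.integral_same,
      intervalIntegral.integral_symm,
      intervalIntegral.integral_congr (g := fun _ => (0:ℝ))
        (fun u hu => hD0 u (by
          rw [uIcc_of_le (le_of_lt hCδ)] at hu
          exact hu.1))]
    simp

lemma aux_cdf {Ω : Type*} [MeasurableSpace Ω] (Pr : Measure Ω) [IsProbabilityMeasure Pr]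
    (C : ℝ) (ξ : Ω → ℝ) (hm : Measurable ξ) (f : ℝ → ℝ)
    (hsupp : ∀ u, u ∉ Icc (-C) C → f u = 0)
    (hlaw : Measure.map ξ Pr = volume.withDensity (fun u => ENNReal.ofReal (f u)))
    (F : ℝ → ℝ) (hF : ∀ u, F u = (Pr {ω | ξ ω ≤ u}).toReal) (δ : ℝ) :
    ∫ ω, (if ξ ω ≤ δ then δ - ξ ω else 0) ∂Pr = ∫ u in (-C)..δ, F u := by
  have hF0 : ∀ u, u ≤ -C → F u = 0 := by
    intro u hu
    have h0 : Pr (ξ ⁻¹' Iic u) = 0 := by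
      rw [← Measure.map_apply hm measurableSet_Iic, hlaw, withDensity_apply _ measurableSet_Iic,
        ← Measure.restrict_congr_set (Iio_ae_eq_Iic (a := u)),
        setLIntegral_congr_fun (g := fun _ => 0) measurableSet_Iio (fun v hv => by
          have : f v = 0 := hsupp v (by
            intro hmem
            exact absurd hmem.1 (not_le.mpr (lt_of_lt_of_le hv hu)))
          simp [this]), lintegral_zero]
    rw [hF u]
    have : {ω | ξ ω ≤ u} = ξ ⁻¹' Iic u := rfl
    rw [this, h0]
    simp
  have hbound : ∀ᵐ ω ∂Pr, ξ ω ∈ Icc (-C) C := by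
    have h0 : Pr (ξ ⁻¹' (Icc (-C) C)ᶜ) = 0 :=
      law_null Pr ξ hm f hlaw measurableSet_Icc.compl (fun u hu => hsupp u hu)
    rw [ae_iff]
    exact h0
  have hmax : (fun ω => if ξ ω ≤ δ then δ - ξ ω else 0) = fun ω => max (δ - ξ ω) 0 := by
    funext ω
    by_cases h : ξ ω ≤ δ
    · rw [if_pos h, max_eq_left (by linarith)]
    · rw [if_neg h, max_eq_right (by push_neg at h; linarith)]
  rw [hmax]
  have hintg : Integrable (fun ω => max (δ - ξ ω) 0) Pr := by
    refine Integrable.mono' (integrable_const (max (δ + C) 0))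
      (((measurable_const.sub hm).max measurable_const).aestronglyMeasurable) ?_
    filter_upwards [hbound] with ω hω
    rw [Real.norm_eq_abs, abs_of_nonneg (le_max_right _ _)]
    exact max_le_max (by linarith [hω.1]) le_rfl
  rw [hintg.integral_eq_integral_meas_le (Filter.Eventually.of_forall fun ω => le_max_right _ _)]
  have hcongr : ∫ t in Ioi (0:ℝ), (Pr {ω | t ≤ max (δ - ξ ω) 0}).toReal
      = ∫ t in Ioi (0:ℝ), F (δ - t) := by
    refine setIntegral_congr_fun measurableSet_Ioi fun t ht => ?_
    rw [hF]
    congr 2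
    ext ω
    simp only [mem_setOf_eq, le_max_iff]
    constructor
    · rintro (h | h)
      · linarith
      · exact absurd h (not_le.mpr ht)
    · intro h; left; linarith
  simp only [← measureReal_def] at hcongr
  rw [hcongr]
  have hshrink : ∫ t in Ioi (0:ℝ), F (δ - t) = ∫ t in Ioc (0:ℝ) (max (δ + C) 0), F (δ - t) := by
    refine (setIntegral_eq_of_subset_of_ae_diff_eq_zero (f := fun t => F (δ - t))
      (μ := volume) (s := Ioc (0:ℝ) (max (δ + C) 0)) (t := Ioi (0:ℝ)) nullMeasurableSet_Ioi
      Ioc_subset_Ioi_self ?_)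
    refine Filter.Eventually.of_forall fun t ht => ?_
    obtain ⟨ht1, ht2⟩ := ht
    have hMt : max (δ + C) 0 < t := by
      by_contra h
      exact ht2 ⟨ht1, not_lt.mp h⟩
    exact hF0 _ (by have := le_max_left (δ + C) 0; linarith)
  rw [hshrink, ← intervalIntegral.integral_of_le (le_max_right (δ + C) 0),
    intervalIntegral.integral_comp_sub_left F δ, sub_zero]
  by_cases hCδ : -C ≤ δ
  · rw [max_eq_left (by linarith : (0:ℝ) ≤ δ + C)]
    congr 1
    ring
  · push_neg at hCδ
    rw [max_eq_right (by linarith : δ + C ≤ (0:ℝ)), sub_zero, intervalIntegral.integral_same,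
      intervalIntegral.integral_symm,
      intervalIntegral.integral_congr (g := fun _ => (0:ℝ))
        (fun u hu => hF0 u (by
          rw [uIcc_of_le (le_of_lt hCδ)] at hu
          exact hu.2))]
    simp
section Helpers
variable {Ω : Type*} [MeasurableSpace Ω] (Pr : Measure Ω) [IsProbabilityMeasure Pr]

lemma integral_ite_le (ξ : Ω → ℝ) (hm : Measurable ξ) (c : ℝ) :
    ∫ ω, (if ξ ω ≤ c then (1:ℝ) else 0) ∂Pr = (Pr {ω | ξ ω ≤ c}).toReal := by
  have h : (fun ω => if ξ ω ≤ c then (1:ℝ) else 0)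
      = ({ω | ξ ω ≤ c}).indicator (fun _ => (1:ℝ)) := by
    funext ω
    by_cases hω : ξ ω ≤ c <;> simp [Set.indicator_apply, hω]
  rw [h]
  have h2 := integral_indicator_const (μ := Pr) (1:ℝ) (hm (measurableSet_Iic (a := c)))
  simp [measureReal_def] at h2
  exact h2

lemma integral_ite_ge (ξ : Ω → ℝ) (hm : Measurable ξ) (c : ℝ) :
    ∫ ω, (if c ≤ ξ ω then (1:ℝ) else 0) ∂Pr = (Pr {ω | c ≤ ξ ω}).toReal := by
  have h : (fun ω => if c ≤ ξ ω then (1:ℝ) else 0)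
      = ({ω | c ≤ ξ ω}).indicator (fun _ => (1:ℝ)) := by
    funext ω
    by_cases hω : c ≤ ξ ω <;> simp [Set.indicator_apply, hω]
  rw [h]
  have h2 := integral_indicator_const (μ := Pr) (1:ℝ) (hm (measurableSet_Ici (a := c)))
  simp [measureReal_def] at h2
  exact h2
end Helpers


/-- Lemma 1 of the paper: decomposition of the expected gain from trade.
If the seller's valuation is `s = ⟪x, θs⟫ + ξs` and the buyer's is `b = ⟪x, θb⟫ + ξb`, with
`ξs, ξb` independent, centered, supported in `[-C, C]` and having densities bounded by `L`, then
`EGFT(x, p) = I(δᵇ)·Fˢ(δˢ) + J(δˢ)·Dᵇ(δᵇ)` where `δˢ = p - ⟪x, θs⟫`, `δᵇ = p - ⟪x, θb⟫`. -/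
theorem stmt_4
    {d : ℕ} (A B C L : ℝ)
    (P : ℝ) (hP : P = C + A * B)
    {Ω : Type*} [MeasurableSpace Ω] (Pr : Measure Ω) [IsProbabilityMeasure Pr]
    (ξs ξb : Ω → ℝ) (hmξs : Measurable ξs) (hmξb : Measurable ξb)
    (hindep : IndepFun ξs ξb Pr)
    (fs fb : ℝ → ℝ)
    (hfs0 : ∀ u, 0 ≤ fs u) (hfb0 : ∀ u, 0 ≤ fb u)
    (hfsL : ∀ u, fs u ≤ L) (hfbL : ∀ u, fb u ≤ L)
    (hfssupp : ∀ u, u ∉ Icc (-C) C → fs u = 0)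
    (hfbsupp : ∀ u, u ∉ Icc (-C) C → fb u = 0)
    (hlaws : Measure.map ξs Pr = volume.withDensity (fun u => ENNReal.ofReal (fs u)))
    (hlawb : Measure.map ξb Pr = volume.withDensity (fun u => ENNReal.ofReal (fb u)))
    (hcents : ∫ ω, ξs ω ∂Pr = 0) (hcentb : ∫ ω, ξb ω ∂Pr = 0)
    (θs θb x : EuclideanSpace ℝ (Fin d))
    (hθs : ‖θs‖ ≤ A) (hθb : ‖θb‖ ≤ A) (hx : ‖x‖ ≤ B)
    (Fs Db I J : ℝ → ℝ)
    (hFs : ∀ u, Fs u = (Pr {ω | ξs ω ≤ u}).toReal)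
    (hDb : ∀ u, Db u = (Pr {ω | u ≤ ξb ω}).toReal)
    (hI : ∀ δ, I δ = ∫ u in δ..C, Db u)
    (hJ : ∀ δ, J δ = ∫ u in (-C)..δ, Fs u)
    (p : ℝ) :
    (∫ ω, (if ⟪x, θs⟫_ℝ + ξs ω ≤ p ∧ p ≤ ⟪x, θb⟫_ℝ + ξb ω
        then (⟪x, θb⟫_ℝ + ξb ω) - (⟪x, θs⟫_ℝ + ξs ω) else 0) ∂Pr)
      = I (p - ⟪x, θb⟫_ℝ) * Fs (p - ⟪x, θs⟫_ℝ)
        + J (p - ⟪x, θs⟫_ℝ) * Db (p - ⟪x, θb⟫_ℝ) := by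
  set δS := p - ⟪x, θs⟫_ℝ with hδS
  set δB := p - ⟪x, θb⟫_ℝ with hδB
  -- a.e. boundedness of the noises
  have hbs : ∀ᵐ ω ∂Pr, ξs ω ∈ Icc (-C) C := by
    have h0 : Pr (ξs ⁻¹' (Icc (-C) C)ᶜ) = 0 :=
      law_null Pr ξs hmξs fs hlaws measurableSet_Icc.compl (fun u hu => hfssupp u hu)
    rw [ae_iff]; exact h0
  have hbb : ∀ᵐ ω ∂Pr, ξb ω ∈ Icc (-C) C := by
    have h0 : Pr (ξb ⁻¹' (Icc (-C) C)ᶜ) = 0 :=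
      law_null Pr ξb hmξb fb hlawb measurableSet_Icc.compl (fun u hu => hfbsupp u hu)
    rw [ae_iff]; exact h0
  -- pointwise decomposition of the integrand
  have hpt : ∀ ω, (if ⟪x, θs⟫_ℝ + ξs ω ≤ p ∧ p ≤ ⟪x, θb⟫_ℝ + ξb ω
        then (⟪x, θb⟫_ℝ + ξb ω) - (⟪x, θs⟫_ℝ + ξs ω) else 0)
      = ((fun u => if u ≤ δS then (1:ℝ) else 0) ∘ ξs) ω
          * ((fun v => if δB ≤ v then v - δB else 0) ∘ ξb) ω
        + ((fun v => if δB ≤ v then (1:ℝ) else 0) ∘ ξb) ω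
          * ((fun u => if u ≤ δS then δS - u else 0) ∘ ξs) ω := by
    intro ω
    have e1 : (⟪x, θs⟫_ℝ + ξs ω ≤ p) ↔ (ξs ω ≤ δS) := by
      rw [hδS]; constructor <;> intro <;> linarith
    have e2 : (p ≤ ⟪x, θb⟫_ℝ + ξb ω) ↔ (δB ≤ ξb ω) := by
      rw [hδB]; constructor <;> intro <;> linarith
    have hval : ⟪x, θb⟫_ℝ + ξb ω - (⟪x, θs⟫_ℝ + ξs ω) = (ξb ω - δB) + (δS - ξs ω) := by
      rw [hδS, hδB]; ring
    simp only [Function.comp_apply]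
    by_cases h1 : ξs ω ≤ δS <;> by_cases h2 : δB ≤ ξb ω
    · rw [if_pos ⟨e1.mpr h1, e2.mpr h2⟩, if_pos h1, if_pos h2, if_pos h2, if_pos h1, hval]; ring
    · rw [if_neg (fun hc => h2 (e2.mp hc.2)), if_pos h1, if_neg h2, if_neg h2, if_pos h1]; ring
    · rw [if_neg (fun hc => h1 (e1.mp hc.1)), if_neg h1, if_pos h2, if_pos h2, if_neg h1]; ring
    · rw [if_neg (fun hc => h1 (e1.mp hc.1)), if_neg h1, if_neg h2, if_neg h2, if_neg h1]; ring
  rw [integral_congr_ae (Filter.Eventually.of_forall hpt)]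
  -- measurability of the four component functions
  have mG1 : Measurable (fun u : ℝ => if u ≤ δS then (1:ℝ) else 0) :=
    Measurable.ite measurableSet_Iic measurable_const measurable_const
  have mG2 : Measurable (fun u : ℝ => if u ≤ δS then δS - u else 0) :=
    Measurable.ite measurableSet_Iic (measurable_const.sub measurable_id) measurable_const
  have mH1 : Measurable (fun v : ℝ => if δB ≤ v then v - δB else 0) :=
    Measurable.ite measurableSet_Ici (measurable_id.sub measurable_const) measurable_const
  have mH2 : Measurable (fun v : ℝ => if δB ≤ v then (1:ℝ) else 0) :=
    Measurable.ite measurableSet_Ici measurable_const measurable_const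
  -- integrability of each factor
  have iG1 : Integrable ((fun u => if u ≤ δS then (1:ℝ) else 0) ∘ ξs) Pr := by
    refine Integrable.mono' (integrable_const 1) ((mG1.comp hmξs).aestronglyMeasurable)
      (Filter.Eventually.of_forall fun ω => ?_)
    simp only [Function.comp_apply]
    split_ifs <;> simp
  have iH2 : Integrable ((fun v => if δB ≤ v then (1:ℝ) else 0) ∘ ξb) Pr := by
    refine Integrable.mono' (integrable_const 1) ((mH2.comp hmξb).aestronglyMeasurable)
      (Filter.Eventually.of_forall fun ω => ?_)
    simp only [Function.comp_apply]
    split_ifs <;> simp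
  have iH1 : Integrable ((fun v => if δB ≤ v then v - δB else 0) ∘ ξb) Pr := by
    refine Integrable.mono' (integrable_const (|C| + |δB|)) ((mH1.comp hmξb).aestronglyMeasurable) ?_
    filter_upwards [hbb] with ω hω
    have habs : |ξb ω| ≤ C := abs_le.mpr ⟨hω.1, hω.2⟩
    simp only [Function.comp_apply]
    split_ifs with h
    · rw [Real.norm_eq_abs]
      calc |ξb ω - δB| ≤ |ξb ω| + |δB| := abs_sub _ _
        _ ≤ |C| + |δB| := add_le_add_left (habs.trans (le_abs_self C)) _
    · simp only [norm_zero]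
      positivity
  have iG2 : Integrable ((fun u => if u ≤ δS then δS - u else 0) ∘ ξs) Pr := by
    refine Integrable.mono' (integrable_const (|δS| + |C|)) ((mG2.comp hmξs).aestronglyMeasurable) ?_
    filter_upwards [hbs] with ω hω
    have habs : |ξs ω| ≤ C := abs_le.mpr ⟨hω.1, hω.2⟩
    simp only [Function.comp_apply]
    split_ifs with h
    · rw [Real.norm_eq_abs]
      calc |δS - ξs ω| ≤ |δS| + |ξs ω| := abs_sub _ _
        _ ≤ |δS| + |C| := add_le_add_right (habs.trans (le_abs_self C)) _
    · simp only [norm_zero]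
      positivity
  -- independence of the composed factors
  have ind1 : IndepFun ((fun u => if u ≤ δS then (1:ℝ) else 0) ∘ ξs)
      ((fun v => if δB ≤ v then v - δB else 0) ∘ ξb) Pr := hindep.comp mG1 mH1
  have ind2 : IndepFun ((fun v => if δB ≤ v then (1:ℝ) else 0) ∘ ξb)
      ((fun u => if u ≤ δS then δS - u else 0) ∘ ξs) Pr := hindep.symm.comp mH2 mG2
  have iprod1 : Integrable (fun ω => ((fun u => if u ≤ δS then (1:ℝ) else 0) ∘ ξs) ω
      * ((fun v => if δB ≤ v then v - δB else 0) ∘ ξb) ω) Pr := ind1.integrable_mul iG1 iH1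
  have iprod2 : Integrable (fun ω => ((fun v => if δB ≤ v then (1:ℝ) else 0) ∘ ξb) ω
      * ((fun u => if u ≤ δS then δS - u else 0) ∘ ξs) ω) Pr := ind2.integrable_mul iH2 iG2
  rw [integral_add iprod1 iprod2]
  have emul1 : (∫ ω, ((fun u => if u ≤ δS then (1:ℝ) else 0) ∘ ξs) ω
        * ((fun v => if δB ≤ v then v - δB else 0) ∘ ξb) ω ∂Pr)
      = (∫ ω, ((fun u => if u ≤ δS then (1:ℝ) else 0) ∘ ξs) ω ∂Pr)
        * ∫ ω, ((fun v => if δB ≤ v then v - δB else 0) ∘ ξb) ω ∂Pr :=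
    ind1.integral_mul_eq_mul_integral iG1.aestronglyMeasurable iH1.aestronglyMeasurable
  have emul2 : (∫ ω, ((fun v => if δB ≤ v then (1:ℝ) else 0) ∘ ξb) ω
        * ((fun u => if u ≤ δS then δS - u else 0) ∘ ξs) ω ∂Pr)
      = (∫ ω, ((fun v => if δB ≤ v then (1:ℝ) else 0) ∘ ξb) ω ∂Pr)
        * ∫ ω, ((fun u => if u ≤ δS then δS - u else 0) ∘ ξs) ω ∂Pr :=
    ind2.integral_mul_eq_mul_integral iH2.aestronglyMeasurable iG2.aestronglyMeasurable
  rw [emul1, emul2]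
  -- compute the four marginal integrals
  have eG1 : ∫ ω, ((fun u => if u ≤ δS then (1:ℝ) else 0) ∘ ξs) ω ∂Pr = Fs δS := by
    rw [show (∫ ω, ((fun u => if u ≤ δS then (1:ℝ) else 0) ∘ ξs) ω ∂Pr)
        = ∫ ω, (if ξs ω ≤ δS then (1:ℝ) else 0) ∂Pr from rfl,
      integral_ite_le Pr ξs hmξs δS, hFs]
  have eH2 : ∫ ω, ((fun v => if δB ≤ v then (1:ℝ) else 0) ∘ ξb) ω ∂Pr = Db δB := by
    rw [show (∫ ω, ((fun v => if δB ≤ v then (1:ℝ) else 0) ∘ ξb) ω ∂Pr)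
        = ∫ ω, (if δB ≤ ξb ω then (1:ℝ) else 0) ∂Pr from rfl,
      integral_ite_ge Pr ξb hmξb δB, hDb]
  have eH1 : ∫ ω, ((fun v => if δB ≤ v then v - δB else 0) ∘ ξb) ω ∂Pr = I δB := by
    rw [hI]
    exact aux_tail Pr C ξb hmξb fb hfbsupp hlawb Db hDb δB
  have eG2 : ∫ ω, ((fun u => if u ≤ δS then δS - u else 0) ∘ ξs) ω ∂Pr = J δS := by
    rw [hJ]
    exact aux_cdf Pr C ξs hmξs fs hfssupp hlaws Fs hFs δS
  rw [eG1, eH2, eH1, eG2]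
  ring
end

section
/- Let ξ^s, ξ^b be independent centered random variables supported in [−C,C] with densities f^s, f^b bounded by L; fix x, θ^s, θ^b with ‖x‖ ≤ B, ‖θ^s‖, ‖θ^b‖ ≤ A, set P = C + AB, and define EGFT(x,p) = E[1{xᵀθ^s + ξ^s ≤ p}·1{p ≤ xᵀθ^b + ξ^b}·((xᵀθ^b + ξ^b) − (xᵀθ^s + ξ^s))]. Then the map p ↦ EGFT(x,p) is 2LP-Lipschitz continuous on ℝ. -/
open MeasureTheory ProbabilityTheory Set
open scoped InnerProductSpace

private lemma min_add_min_le' {c u v : ℝ} (hc : 0 ≤ c) (h : u + v ≤ c) :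
    min c u + min c v ≤ c := by
  rcases le_total u c with hu | hu
  · rcases le_total v c with hv | hv
    · have h1 : min c u ≤ u := min_le_right _ _
      have h2 : min c v ≤ v := min_le_right _ _
      linarith
    · have h1 : min c u ≤ u := min_le_right _ _
      have h2 : min c v ≤ c := min_le_left _ _
      linarith
  · have h1 : min c u ≤ c := min_le_left _ _
    have h2 : min c v ≤ v := min_le_right _ _
    linarith

private lemma lipschitz_of_quadratic' {f : ℝ → ℝ} {K M : ℝ} (hM : 0 ≤ M)
    (h : ∀ p q : ℝ, p ≤ q → |f q - f p| ≤ K * (q - p) + M * (q - p) ^ 2) :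
    ∀ p q : ℝ, p ≤ q → |f q - f p| ≤ K * (q - p) := by
  intro p q hpq
  refine le_of_forall_pos_le_add (fun ε hε => ?_)
  obtain ⟨n, hn⟩ := exists_nat_gt (M * (q - p) ^ 2 / ε)
  have hn0 : 0 < (n : ℝ) :=
    lt_of_le_of_lt (div_nonneg (mul_nonneg hM (sq_nonneg _)) hε.le) hn
  set d : ℝ := (q - p) / n with hd
  have hd0 : 0 ≤ d := div_nonneg (by linarith) hn0.le
  set x : ℕ → ℝ := fun i => p + d * i with hx
  have hstep : ∀ i : ℕ, x (i + 1) - x i = d := by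
    intro i; simp only [hx]; push_cast; ring
  have hxn : x n = q := by
    simp only [hx, hd]; field_simp; ring
  have h0 : x 0 = p := by simp [hx]
  have htel : f q - f p = ∑ i ∈ Finset.range n, (f (x (i + 1)) - f (x i)) := by
    rw [Finset.sum_range_sub (fun i => f (x i)), hxn, h0]
  have hbound : ∀ i ∈ Finset.range n, |f (x (i + 1)) - f (x i)| ≤ K * d + M * d ^ 2 := by
    intro i _
    have hle : x i ≤ x (i + 1) := by nlinarith [hstep i]
    have := h (x i) (x (i + 1)) hle
    rwa [hstep i] at this
  have hεn : M * (q - p) ^ 2 / n < ε := by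
    have h1 : M * (q - p) ^ 2 < n * ε := by
      rw [div_lt_iff₀ hε] at hn; linarith
    rw [div_lt_iff₀ hn0]; linarith
  calc |f q - f p| = |∑ i ∈ Finset.range n, (f (x (i + 1)) - f (x i))| := by rw [htel]
    _ ≤ ∑ i ∈ Finset.range n, |f (x (i + 1)) - f (x i)| := Finset.abs_sum_le_sum_abs _ _
    _ ≤ ∑ _i ∈ Finset.range n, (K * d + M * d ^ 2) := Finset.sum_le_sum hbound
    _ = n * (K * d + M * d ^ 2) := by rw [Finset.sum_const, Finset.card_range, nsmul_eq_mul]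
    _ = K * (q - p) + M * (q - p) ^ 2 / n := by
        simp only [hd]; field_simp
    _ ≤ K * (q - p) + ε := by linarith

/-- in the noisy linear model, the expected gain from trade
`p ↦ EGFT(x, p)` is `2LP`-Lipschitz continuous on `ℝ`. -/
theorem stmt_10
    {d : ℕ} (A B C L : ℝ)
    (P : ℝ) (hP : P = C + A * B)
    {Ω : Type*} [MeasurableSpace Ω] (Pr : Measure Ω) [IsProbabilityMeasure Pr]
    (ξs ξb : Ω → ℝ) (hmξs : Measurable ξs) (hmξb : Measurable ξb)
    (hindep : IndepFun ξs ξb Pr)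
    (fs fb : ℝ → ℝ)
    (hfs0 : ∀ u, 0 ≤ fs u) (hfb0 : ∀ u, 0 ≤ fb u)
    (hfsL : ∀ u, fs u ≤ L) (hfbL : ∀ u, fb u ≤ L)
    (hfssupp : ∀ u, u ∉ Icc (-C) C → fs u = 0)
    (hfbsupp : ∀ u, u ∉ Icc (-C) C → fb u = 0)
    (hlaws : Measure.map ξs Pr = volume.withDensity (fun u => ENNReal.ofReal (fs u)))
    (hlawb : Measure.map ξb Pr = volume.withDensity (fun u => ENNReal.ofReal (fb u)))
    (hcents : ∫ ω, ξs ω ∂Pr = 0) (hcentb : ∫ ω, ξb ω ∂Pr = 0)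
    (θs θb x : EuclideanSpace ℝ (Fin d))
    (hθs : ‖θs‖ ≤ A) (hθb : ‖θb‖ ≤ A) (hx : ‖x‖ ≤ B)
    (EGFT : ℝ → ℝ)
    (hEGFT : ∀ p, EGFT p =
      ∫ ω, (if ⟪x, θs⟫_ℝ + ξs ω ≤ p ∧ p ≤ ⟪x, θb⟫_ℝ + ξb ω
        then (⟪x, θb⟫_ℝ + ξb ω) - (⟪x, θs⟫_ℝ + ξs ω) else 0) ∂Pr) :
    ∀ p₁ p₂ : ℝ, |EGFT p₁ - EGFT p₂| ≤ 2 * L * P * |p₁ - p₂| := by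
  set s := ⟪x, θs⟫_ℝ with hsdef
  set t := ⟪x, θb⟫_ℝ with htdef
  have hL0 : 0 ≤ L := le_trans (hfs0 0) (hfsL 0)
  have hA0 : 0 ≤ A := le_trans (norm_nonneg _) hθs
  have hB0 : 0 ≤ B := le_trans (norm_nonneg _) hx
  have hs_abs : |s| ≤ A * B := by
    calc |s| ≤ ‖x‖ * ‖θs‖ := abs_real_inner_le_norm x θs
      _ ≤ B * A := mul_le_mul hx hθs (norm_nonneg _) hB0
      _ = A * B := mul_comm _ _
  have ht_abs : |t| ≤ A * B := by
    calc |t| ≤ ‖x‖ * ‖θb‖ := abs_real_inner_le_norm x θb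
      _ ≤ B * A := mul_le_mul hx hθb (norm_nonneg _) hB0
      _ = A * B := mul_comm _ _
  have hsl := abs_le.mp hs_abs
  have htl := abs_le.mp ht_abs
  -- a.s. support
  have key_ae : ∀ (ξ : Ω → ℝ) (f : ℝ → ℝ), Measurable ξ →
      (∀ u, u ∉ Icc (-C) C → f u = 0) →
      Measure.map ξ Pr = volume.withDensity (fun u => ENNReal.ofReal (f u)) →
      ∀ᵐ ω ∂Pr, ξ ω ∈ Icc (-C) C := by
    intro ξ f hm hsupp hlaw
    rw [ae_iff]
    have hset : {ω | ¬ ξ ω ∈ Icc (-C) C} = ξ ⁻¹' (Icc (-C) C)ᶜ := rfl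
    rw [hset, ← Measure.map_apply hm measurableSet_Icc.compl, hlaw,
      withDensity_apply _ measurableSet_Icc.compl]
    have hz : ∀ᵐ u ∂(volume.restrict (Icc (-C) C)ᶜ), ENNReal.ofReal (f u) = 0 := by
      refine (ae_restrict_iff' measurableSet_Icc.compl).mpr (ae_of_all _ fun u hu => ?_)
      simp [hsupp u hu]
    rw [lintegral_congr_ae hz, lintegral_zero]
  have haes := key_ae ξs fs hmξs hfssupp hlaws
  have haeb := key_ae ξb fb hmξb hfbsupp hlawb
  have hC0 : 0 ≤ C := by
    obtain ⟨ω, hω⟩ := haes.exists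
    simp only [mem_Icc] at hω
    linarith [hω.1, hω.2]
  have hP0 : 0 ≤ P := by rw [hP]; have := mul_nonneg hA0 hB0; linarith
  -- integrability helper
  have int_of_bound : ∀ (h : Ω → ℝ) (c : ℝ), Measurable h → (∀ᵐ ω ∂Pr, |h ω| ≤ c) →
      Integrable h Pr := by
    intro h c hm hb
    refine (integrable_const c).mono' hm.aestronglyMeasurable ?_
    simpa [Real.norm_eq_abs] using hb
  -- measure-of-set bound
  have meas_bound : ∀ (ξ : Ω → ℝ) (f : ℝ → ℝ), Measurable ξ →
      (∀ u, f u ≤ L) →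
      Measure.map ξ Pr = volume.withDensity (fun u => ENNReal.ofReal (f u)) →
      ∀ (S : Set ℝ) (c : ℝ), 0 ≤ c → MeasurableSet S → volume S = ENNReal.ofReal c →
      (Pr (ξ ⁻¹' S)).toReal ≤ L * c := by
    intro ξ f hm hfL hlaw S c hc hS hvol
    have h1 : Pr (ξ ⁻¹' S) = ∫⁻ u in S, ENNReal.ofReal (f u) ∂volume := by
      rw [← Measure.map_apply hm hS, hlaw, withDensity_apply _ hS]
    have h2 : ∫⁻ u in S, ENNReal.ofReal (f u) ∂volume ≤ ENNReal.ofReal (L * c) := by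
      calc ∫⁻ u in S, ENNReal.ofReal (f u) ∂volume
          ≤ ∫⁻ _u in S, ENNReal.ofReal L ∂volume :=
            lintegral_mono fun u => ENNReal.ofReal_le_ofReal (hfL u)
        _ = ENNReal.ofReal L * volume S := setLIntegral_const S _
        _ = ENNReal.ofReal (L * c) := by rw [hvol, ← ENNReal.ofReal_mul hL0]
    exact ENNReal.toReal_le_of_le_ofReal (mul_nonneg hL0 hc) (h1 ▸ h2)
  -- the main quadratic estimate
  have key : ∀ p₁ p₂ : ℝ, p₁ ≤ p₂ →
      |EGFT p₂ - EGFT p₁| ≤ (2 * L * P) * (p₂ - p₁) + L * (p₂ - p₁) ^ 2 := by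
    intro p₁ p₂ hple
    set Δ := p₂ - p₁ with hΔdef
    have hΔ0 : 0 ≤ Δ := by simp only [hΔdef]; linarith
    set G : ℝ → Ω → ℝ := fun p ω =>
      if s + ξs ω ≤ p ∧ p ≤ t + ξb ω then (t + ξb ω) - (s + ξs ω) else 0 with hGdef
    have hG : ∀ p, EGFT p = ∫ ω, G p ω ∂Pr := by
      intro p; rw [hEGFT p]
    set φ₁ : ℝ → ℝ := fun u => if u ∈ Ioc (p₁ - s) (p₂ - s) then 1 else 0 with hφ₁def
    set ψ₁ : ℝ → ℝ := fun v => if p₂ ≤ t + v then min (2 * P) (t + v - p₁) else 0 with hψ₁def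
    set ψ₂ : ℝ → ℝ := fun u => if s + u ≤ p₁ then min (2 * P) (p₂ - (s + u)) else 0 with hψ₂def
    set φ₂ : ℝ → ℝ := fun v => if v ∈ Ico (p₁ - t) (p₂ - t) then 1 else 0 with hφ₂def
    -- measurability
    have hmφ₁ : Measurable φ₁ :=
      Measurable.ite measurableSet_Ioc measurable_const measurable_const
    have hmφ₂ : Measurable φ₂ :=
      Measurable.ite measurableSet_Ico measurable_const measurable_const
    have hmψ₁ : Measurable ψ₁ := by
      refine Measurable.ite (measurableSet_le measurable_const
        (measurable_const.add measurable_id)) ?_ measurable_const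
      exact measurable_const.min ((measurable_const.add measurable_id).sub measurable_const)
    have hmψ₂ : Measurable ψ₂ := by
      refine Measurable.ite (measurableSet_le (measurable_const.add measurable_id)
        measurable_const) ?_ measurable_const
      exact measurable_const.min (measurable_const.sub (measurable_const.add measurable_id))
    have hmG : ∀ p, Measurable (G p) := by
      intro p
      refine Measurable.ite ?_ ((measurable_const.add hmξb).sub (measurable_const.add hmξs))
        measurable_const
      exact (measurableSet_le (measurable_const.add hmξs) measurable_const).inter
        (measurableSet_le measurable_const (measurable_const.add hmξb))
    -- pointwise bounds on the auxiliary functions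
    have hφ₁0 : ∀ u, 0 ≤ φ₁ u := by
      intro u; simp only [hφ₁def]; split <;> norm_num
    have hφ₁1 : ∀ u, φ₁ u ≤ 1 := by
      intro u; simp only [hφ₁def]; split <;> norm_num
    have hφ₂0 : ∀ v, 0 ≤ φ₂ v := by
      intro v; simp only [hφ₂def]; split <;> norm_num
    have hφ₂1 : ∀ v, φ₂ v ≤ 1 := by
      intro v; simp only [hφ₂def]; split <;> norm_num
    have hψ₁0 : ∀ v, 0 ≤ ψ₁ v := by
      intro v; simp only [hψ₁def]; split
      · rename_i h; exact le_min (by linarith) (by linarith)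
      · exact le_refl 0
    have hψ₁le : ∀ v, ψ₁ v ≤ 2 * P := by
      intro v; simp only [hψ₁def]; split
      · exact min_le_left _ _
      · linarith
    have hψ₂0 : ∀ u, 0 ≤ ψ₂ u := by
      intro u; simp only [hψ₂def]; split
      · rename_i h; exact le_min (by linarith) (by linarith)
      · exact le_refl 0
    have hψ₂le : ∀ u, ψ₂ u ≤ 2 * P := by
      intro u; simp only [hψ₂def]; split
      · exact min_le_left _ _
      · linarith
    -- integrability of everything
    have hGint : ∀ p, Integrable (G p) Pr := by
      intro p
      refine int_of_bound _ (2 * P) (hmG p) ?_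
      filter_upwards [haes, haeb] with ω h1 h2
      simp only [mem_Icc] at h1 h2
      simp only [hGdef]
      split
      · rename_i h; rw [abs_le]; constructor <;> [skip; skip] <;> rw [hP] at * <;> linarith
      · rw [abs_zero]; linarith
    have hint1 : Integrable (fun ω => φ₁ (ξs ω)) Pr :=
      int_of_bound _ 1 (hmφ₁.comp hmξs)
        (ae_of_all _ fun ω => abs_le.mpr ⟨by linarith [hφ₁0 (ξs ω)], hφ₁1 _⟩)
    have hint2 : Integrable (fun ω => ψ₁ (ξb ω)) Pr :=
      int_of_bound _ (2 * P) (hmψ₁.comp hmξb)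
        (ae_of_all _ fun ω => abs_le.mpr ⟨by linarith [hψ₁0 (ξb ω)], hψ₁le _⟩)
    have hint3 : Integrable (fun ω => ψ₂ (ξs ω)) Pr :=
      int_of_bound _ (2 * P) (hmψ₂.comp hmξs)
        (ae_of_all _ fun ω => abs_le.mpr ⟨by linarith [hψ₂0 (ξs ω)], hψ₂le _⟩)
    have hint4 : Integrable (fun ω => φ₂ (ξb ω)) Pr :=
      int_of_bound _ 1 (hmφ₂.comp hmξb)
        (ae_of_all _ fun ω => abs_le.mpr ⟨by linarith [hφ₂0 (ξb ω)], hφ₂1 _⟩)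
    have hprod1 : Integrable (fun ω => φ₁ (ξs ω) * ψ₁ (ξb ω)) Pr := by
      refine int_of_bound _ (1 * (2 * P)) ((hmφ₁.comp hmξs).mul (hmψ₁.comp hmξb))
        (ae_of_all _ fun ω => ?_)
      rw [abs_mul]
      exact mul_le_mul (abs_le.mpr ⟨by linarith [hφ₁0 (ξs ω)], hφ₁1 _⟩)
        (abs_le.mpr ⟨by linarith [hψ₁0 (ξb ω)], hψ₁le _⟩) (abs_nonneg _) zero_le_one
    have hprod2 : Integrable (fun ω => ψ₂ (ξs ω) * φ₂ (ξb ω)) Pr := by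
      refine int_of_bound _ ((2 * P) * 1) ((hmψ₂.comp hmξs).mul (hmφ₂.comp hmξb))
        (ae_of_all _ fun ω => ?_)
      rw [abs_mul]
      exact mul_le_mul (abs_le.mpr ⟨by linarith [hψ₂0 (ξs ω)], hψ₂le _⟩)
        (abs_le.mpr ⟨by linarith [hφ₂0 (ξb ω)], hφ₂1 _⟩) (abs_nonneg _) (by linarith)
    -- pointwise key inequality
    have hpt : ∀ᵐ ω ∂Pr, |G p₂ ω - G p₁ ω| ≤
        φ₁ (ξs ω) * ψ₁ (ξb ω) + ψ₂ (ξs ω) * φ₂ (ξb ω) := by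
      filter_upwards [haes, haeb] with ω h1 h2
      simp only [mem_Icc] at h1 h2
      have hba : (t + ξb ω) - (s + ξs ω) ≤ 2 * P := by rw [hP] at *; linarith
      have hRHS0 : 0 ≤ φ₁ (ξs ω) * ψ₁ (ξb ω) + ψ₂ (ξs ω) * φ₂ (ξb ω) :=
        add_nonneg (mul_nonneg (hφ₁0 _) (hψ₁0 _)) (mul_nonneg (hψ₂0 _) (hφ₂0 _))
      by_cases c2 : s + ξs ω ≤ p₂ ∧ p₂ ≤ t + ξb ω
      · by_cases c1 : s + ξs ω ≤ p₁ ∧ p₁ ≤ t + ξb ω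
        · simp only [hGdef, if_pos c1, if_pos c2, sub_self, abs_zero]; exact hRHS0
        · -- only c2 : the seller threshold crosses in (p₁, p₂]
          have ha : p₁ < s + ξs ω := by
            by_contra hh; push_neg at hh; exact c1 ⟨hh, le_trans hple c2.2⟩
          have hφ : φ₁ (ξs ω) = 1 := by
            simp only [hφ₁def, mem_Ioc, if_pos (show p₁ - s < ξs ω ∧ ξs ω ≤ p₂ - s by
              constructor <;> linarith [c2.1])]
          have hψ : (t + ξb ω) - (s + ξs ω) ≤ ψ₁ (ξb ω) := by
            simp only [hψ₁def, if_pos c2.2]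
            exact le_min hba (by linarith)
          have hval : |G p₂ ω - G p₁ ω| = (t + ξb ω) - (s + ξs ω) := by
            simp only [hGdef, if_pos c2, if_neg c1, sub_zero]
            exact abs_of_nonneg (by linarith [c2.1, c2.2])
          rw [hval]
          calc (t + ξb ω) - (s + ξs ω) ≤ φ₁ (ξs ω) * ψ₁ (ξb ω) := by rw [hφ, one_mul]; exact hψ
            _ ≤ φ₁ (ξs ω) * ψ₁ (ξb ω) + ψ₂ (ξs ω) * φ₂ (ξb ω) :=
              le_add_of_nonneg_right (mul_nonneg (hψ₂0 _) (hφ₂0 _))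
      · by_cases c1 : s + ξs ω ≤ p₁ ∧ p₁ ≤ t + ξb ω
        · -- only c1 : the buyer threshold crosses in [p₁, p₂)
          have hb : t + ξb ω < p₂ := by
            by_contra hh; push_neg at hh; exact c2 ⟨le_trans c1.1 hple, hh⟩
          have hφ : φ₂ (ξb ω) = 1 := by
            simp only [hφ₂def, mem_Ico, if_pos (show p₁ - t ≤ ξb ω ∧ ξb ω < p₂ - t by
              constructor <;> linarith [c1.2])]
          have hψ : (t + ξb ω) - (s + ξs ω) ≤ ψ₂ (ξs ω) := by
            simp only [hψ₂def, if_pos c1.1]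
            exact le_min hba (by linarith)
          have hval : |G p₂ ω - G p₁ ω| = (t + ξb ω) - (s + ξs ω) := by
            simp only [hGdef, if_pos c1, if_neg c2, zero_sub, abs_neg]
            exact abs_of_nonneg (by linarith [c1.1, c1.2])
          rw [hval]
          calc (t + ξb ω) - (s + ξs ω) ≤ ψ₂ (ξs ω) * φ₂ (ξb ω) := by rw [hφ, mul_one]; exact hψ
            _ ≤ φ₁ (ξs ω) * ψ₁ (ξb ω) + ψ₂ (ξs ω) * φ₂ (ξb ω) :=
              le_add_of_nonneg_left (mul_nonneg (hφ₁0 _) (hψ₁0 _))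
        · simp only [hGdef, if_neg c1, if_neg c2, sub_self, abs_zero]; exact hRHS0
    -- independence factorizations
    have hI1 : ∫ ω, φ₁ (ξs ω) * ψ₁ (ξb ω) ∂Pr =
        (∫ ω, φ₁ (ξs ω) ∂Pr) * (∫ ω, ψ₁ (ξb ω) ∂Pr) :=
      IndepFun.integral_fun_mul_eq_mul_integral (hindep.comp hmφ₁ hmψ₁)
        ((hmφ₁.comp hmξs).aestronglyMeasurable) ((hmψ₁.comp hmξb).aestronglyMeasurable)
    have hI2 : ∫ ω, ψ₂ (ξs ω) * φ₂ (ξb ω) ∂Pr =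
        (∫ ω, ψ₂ (ξs ω) ∂Pr) * (∫ ω, φ₂ (ξb ω) ∂Pr) :=
      IndepFun.integral_fun_mul_eq_mul_integral (hindep.comp hmψ₂ hmφ₂)
        ((hmψ₂.comp hmξs).aestronglyMeasurable) ((hmφ₂.comp hmξb).aestronglyMeasurable)
    -- bounds on the four integrals
    have hIφ₁ : ∫ ω, φ₁ (ξs ω) ∂Pr ≤ L * Δ := by
      have heq : ∫ ω, φ₁ (ξs ω) ∂Pr = (Pr (ξs ⁻¹' Ioc (p₁ - s) (p₂ - s))).toReal := by
        rw [← measureReal_def, ← integral_indicator_one (hmξs measurableSet_Ioc)]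
        refine integral_congr_ae (ae_of_all _ fun ω => ?_)
        classical
        rw [Set.indicator_apply]
        exact if_congr Iff.rfl rfl rfl
      rw [heq]
      refine meas_bound ξs fs hmξs hfsL hlaws _ Δ hΔ0 measurableSet_Ioc ?_
      rw [Real.volume_Ioc]; congr 1; simp only [hΔdef]; ring
    have hIφ₂ : ∫ ω, φ₂ (ξb ω) ∂Pr ≤ L * Δ := by
      have heq : ∫ ω, φ₂ (ξb ω) ∂Pr = (Pr (ξb ⁻¹' Ico (p₁ - t) (p₂ - t))).toReal := by
        rw [← measureReal_def, ← integral_indicator_one (hmξb measurableSet_Ico)]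
        refine integral_congr_ae (ae_of_all _ fun ω => ?_)
        classical
        rw [Set.indicator_apply]
        exact if_congr Iff.rfl rfl rfl
      rw [heq]
      refine meas_bound ξb fb hmξb hfbL hlawb _ Δ hΔ0 measurableSet_Ico ?_
      rw [Real.volume_Ico]; congr 1; simp only [hΔdef]; ring
    have hIψ₁0 : 0 ≤ ∫ ω, ψ₁ (ξb ω) ∂Pr := integral_nonneg fun ω => hψ₁0 _
    have hIψ₂0 : 0 ≤ ∫ ω, ψ₂ (ξs ω) ∂Pr := integral_nonneg fun ω => hψ₂0 _
    -- the joint bound on ψ₁ + ψ₂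
    have hptsum : ∀ᵐ ω ∂Pr, ψ₁ (ξb ω) + ψ₂ (ξs ω) ≤ 2 * P + Δ := by
      filter_upwards [haes, haeb] with ω h1 h2
      simp only [mem_Icc] at h1 h2
      by_cases hb : p₂ ≤ t + ξb ω
      · by_cases ha : s + ξs ω ≤ p₁
        · simp only [hψ₁def, hψ₂def, if_pos hb, if_pos ha]
          have hba : (t + ξb ω - p₂) + (p₂ - (s + ξs ω)) ≤ 2 * P := by rw [hP] at *; linarith
          have hmm := min_add_min_le' (by linarith) hba
          have hshift : min (2 * P) (t + ξb ω - p₁) ≤ min (2 * P) (t + ξb ω - p₂) + Δ := by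
            have harg : t + ξb ω - p₁ = (t + ξb ω - p₂) + Δ := by
              simp only [hΔdef]; ring
            rw [harg]
            calc min (2 * P) (t + ξb ω - p₂ + Δ)
                ≤ min (2 * P + Δ) (t + ξb ω - p₂ + Δ) := min_le_min (by linarith) le_rfl
              _ = min (2 * P) (t + ξb ω - p₂) + Δ := min_add_add_right _ _ _
          linarith
        · have e2 : ψ₂ (ξs ω) = 0 := by simp only [hψ₂def, if_neg ha]
          rw [e2]; linarith [hψ₁le (ξb ω)]
      · have e1 : ψ₁ (ξb ω) = 0 := by simp only [hψ₁def, if_neg hb]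
        rw [e1]; linarith [hψ₂le (ξs ω)]
    have hsum : (∫ ω, ψ₁ (ξb ω) ∂Pr) + (∫ ω, ψ₂ (ξs ω) ∂Pr) ≤ 2 * P + Δ := by
      rw [← integral_add hint2 hint3]
      calc ∫ ω, (ψ₁ (ξb ω) + ψ₂ (ξs ω)) ∂Pr ≤ ∫ _ω, (2 * P + Δ) ∂Pr :=
            integral_mono_ae (hint2.add hint3) (integrable_const _) hptsum
        _ = 2 * P + Δ := by simp
    -- assemble
    calc |EGFT p₂ - EGFT p₁| = |∫ ω, (G p₂ ω - G p₁ ω) ∂Pr| := by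
          rw [hG p₂, hG p₁, integral_sub (hGint p₂) (hGint p₁)]
      _ ≤ ∫ ω, |G p₂ ω - G p₁ ω| ∂Pr := by
          simpa [Real.norm_eq_abs] using
            norm_integral_le_integral_norm (μ := Pr) (f := fun ω => G p₂ ω - G p₁ ω)
      _ ≤ ∫ ω, (φ₁ (ξs ω) * ψ₁ (ξb ω) + ψ₂ (ξs ω) * φ₂ (ξb ω)) ∂Pr :=
          integral_mono_ae ((hGint p₂).sub (hGint p₁)).abs (hprod1.add hprod2) hpt
      _ = (∫ ω, φ₁ (ξs ω) ∂Pr) * (∫ ω, ψ₁ (ξb ω) ∂Pr) +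
            (∫ ω, ψ₂ (ξs ω) ∂Pr) * (∫ ω, φ₂ (ξb ω) ∂Pr) := by
          rw [integral_add hprod1 hprod2, hI1, hI2]
      _ ≤ (L * Δ) * (∫ ω, ψ₁ (ξb ω) ∂Pr) + (∫ ω, ψ₂ (ξs ω) ∂Pr) * (L * Δ) :=
          add_le_add (mul_le_mul_of_nonneg_right hIφ₁ hIψ₁0)
            (mul_le_mul_of_nonneg_left hIφ₂ hIψ₂0)
      _ = (L * Δ) * ((∫ ω, ψ₁ (ξb ω) ∂Pr) + (∫ ω, ψ₂ (ξs ω) ∂Pr)) := by ring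
      _ ≤ (L * Δ) * (2 * P + Δ) :=
          mul_le_mul_of_nonneg_left hsum (mul_nonneg hL0 hΔ0)
      _ = (2 * L * P) * Δ + L * Δ ^ 2 := by ring
  -- conclude via the subdivision lemma
  have main := lipschitz_of_quadratic' hL0 key
  intro p₁ p₂
  rcases le_total p₁ p₂ with h | h
  · rw [abs_sub_comm]
    calc |EGFT p₂ - EGFT p₁| ≤ 2 * L * P * (p₂ - p₁) := main p₁ p₂ h
      _ = 2 * L * P * |p₁ - p₂| := by
        rw [abs_sub_comm, abs_of_nonneg (by linarith : (0:ℝ) ≤ p₂ - p₁)]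
  · calc |EGFT p₁ - EGFT p₂| ≤ 2 * L * P * (p₁ - p₂) := main p₂ p₁ h
      _ = 2 * L * P * |p₁ - p₂| := by
        rw [abs_of_nonneg (by linarith : (0:ℝ) ≤ p₁ - p₂)]
end

section
/- In the setting of the noisy linear model (valuations xᵀθ^s + ξ^s and xᵀθ^b + ξ^b in [−P,P], noises supported in [−C,C] with densities bounded by L, P = C + AB), fix ε > 0, set K = ⌈2P/ε⌉ + 3 and K = 〚−K,K〛. Let θ̂^s, θ̂^b ∈ ℝ^d satisfy |xᵀ(θ̂^s − θ^s)| ≤ ε and |xᵀ(θ̂^b − θ^b)| ≤ ε, and let A = {(k,k') ∈ K² : k' = ⌊(xᵀ(θ̂^s − θ̂^b) + kε)/ε⌋}. If (k*, k'*) ∈ argmax_{(k,k')∈A} EGFT(x, xᵀθ̂^s + kε), then max_{p ∈ [−P,P]} EGFT(x,p) − EGFT(x, xᵀθ̂^s + k*ε) ≤ 2LPε. -/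
open MeasureTheory ProbabilityTheory Set
open scoped InnerProductSpace

/-- Lemma 8 of the paper: discretization error. The best price of the
form `⟪x, θ̂s⟫ + kε` over the feasible grid `A` is within `2LPε` of the best price
in `[-P, P]`. -/
theorem stmt_11
    {d : ℕ} (A B C L : ℝ)
    (P : ℝ) (hP : P = C + A * B)
    {Ω : Type*} [MeasurableSpace Ω] (Pr : Measure Ω) [IsProbabilityMeasure Pr]
    (ξs ξb : Ω → ℝ) (hmξs : Measurable ξs) (hmξb : Measurable ξb)
    (hindep : IndepFun ξs ξb Pr)
    (fs fb : ℝ → ℝ)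
    (hfs0 : ∀ u, 0 ≤ fs u) (hfb0 : ∀ u, 0 ≤ fb u)
    (hfsL : ∀ u, fs u ≤ L) (hfbL : ∀ u, fb u ≤ L)
    (hfssupp : ∀ u, u ∉ Icc (-C) C → fs u = 0)
    (hfbsupp : ∀ u, u ∉ Icc (-C) C → fb u = 0)
    (hlaws : Measure.map ξs Pr = volume.withDensity (fun u => ENNReal.ofReal (fs u)))
    (hlawb : Measure.map ξb Pr = volume.withDensity (fun u => ENNReal.ofReal (fb u)))
    (hcents : ∫ ω, ξs ω ∂Pr = 0) (hcentb : ∫ ω, ξb ω ∂Pr = 0)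
    (θs θb x : EuclideanSpace ℝ (Fin d))
    (hθs : ‖θs‖ ≤ A) (hθb : ‖θb‖ ≤ A) (hx : ‖x‖ ≤ B)
    (EGFT : ℝ → ℝ)
    (hEGFT : ∀ q, EGFT q =
      ∫ ω, (if ⟪x, θs⟫_ℝ + ξs ω ≤ q ∧ q ≤ ⟪x, θb⟫_ℝ + ξb ω
        then (⟪x, θb⟫_ℝ + ξb ω) - (⟪x, θs⟫_ℝ + ξs ω) else 0) ∂Pr)
    (ε : ℝ) (hε : 0 < ε)
    (K : ℕ) (hK : K = ⌈2 * P / ε⌉₊ + 3)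
    (θhs θhb : EuclideanSpace ℝ (Fin d))
    (hθhs : |⟪x, θhs - θs⟫_ℝ| ≤ ε) (hθhb : |⟪x, θhb - θb⟫_ℝ| ≤ ε)
    (Agrid : Finset (ℤ × ℤ))
    (hAgrid : Agrid = (Finset.Icc (-(K:ℤ)) (K:ℤ) ×ˢ Finset.Icc (-(K:ℤ)) (K:ℤ)).filter
      (fun kk => kk.2 = ⌊(⟪x, θhs - θhb⟫_ℝ + (kk.1 : ℝ) * ε) / ε⌋))
    (kstar : ℤ × ℤ) (hkstar_mem : kstar ∈ Agrid)
    (hkstar_max : ∀ kk ∈ Agrid,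
      EGFT (⟪x, θhs⟫_ℝ + (kk.1 : ℝ) * ε) ≤ EGFT (⟪x, θhs⟫_ℝ + (kstar.1 : ℝ) * ε)) :
    ∀ p ∈ Icc (-P) P,
      EGFT p - EGFT (⟪x, θhs⟫_ℝ + (kstar.1 : ℝ) * ε) ≤ 2 * L * P * ε := by
  intro p hp
  obtain ⟨hpl, hpr⟩ := hp
  have hA : (0:ℝ) ≤ A := le_trans (norm_nonneg θs) hθs
  have hB : (0:ℝ) ≤ B := le_trans (norm_nonneg x) hx
  have hL : (0:ℝ) ≤ L := le_trans (hfb0 0) (hfbL 0)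
  -- C ≥ 0
  have hC : (0:ℝ) ≤ C := by
    by_contra hc
    push_neg at hc
    have h0 : ∀ u : ℝ, fb u = 0 := fun u => hfbsupp u (by
      rw [Set.Icc_eq_empty (by linarith)]; exact Set.notMem_empty u)
    have h1 : Measure.map ξb Pr Set.univ = 1 := by
      rw [Measure.map_apply hmξb MeasurableSet.univ, Set.preimage_univ, measure_univ]
    have h2 : (fun u => ENNReal.ofReal (fb u)) = (0 : ℝ → ENNReal) := by
      funext u; simp [h0 u]
    rw [hlawb, h2, withDensity_zero] at h1
    simp at h1
  have hP0 : (0:ℝ) ≤ P := by rw [hP]; positivity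
  set ms := ⟪x, θs⟫_ℝ with hms_def
  set mb := ⟪x, θb⟫_ℝ with hmb_def
  have hms : |ms| ≤ A * B := by
    calc |ms| ≤ ‖x‖ * ‖θs‖ := abs_real_inner_le_norm x θs
    _ ≤ B * A := mul_le_mul hx hθs (norm_nonneg _) hB
    _ = A * B := mul_comm _ _
  have hmb : |mb| ≤ A * B := by
    calc |mb| ≤ ‖x‖ * ‖θb‖ := abs_real_inner_le_norm x θb
    _ ≤ B * A := mul_le_mul hx hθb (norm_nonneg _) hB
    _ = A * B := mul_comm _ _
  have hms' := abs_le.mp hms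
  have hmb' := abs_le.mp hmb
  -- a.e. support bounds
  have haeb : ∀ᵐ ω ∂Pr, ξb ω ∈ Icc (-C) C := by
    rw [ae_iff]
    have hpre : {ω | ¬ ξb ω ∈ Icc (-C) C} = ξb ⁻¹' (Icc (-C) C)ᶜ := rfl
    rw [hpre, ← Measure.map_apply hmξb measurableSet_Icc.compl, hlawb,
      withDensity_apply _ measurableSet_Icc.compl]
    calc ∫⁻ u in (Icc (-C) C)ᶜ, ENNReal.ofReal (fb u)
        = ∫⁻ u in (Icc (-C) C)ᶜ, 0 := by
          refine setLIntegral_congr_fun measurableSet_Icc.compl (fun u hu => ?_)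
          simp [hfbsupp u hu]
      _ = 0 := lintegral_zero
  have haes : ∀ᵐ ω ∂Pr, ξs ω ∈ Icc (-C) C := by
    rw [ae_iff]
    have hpre : {ω | ¬ ξs ω ∈ Icc (-C) C} = ξs ⁻¹' (Icc (-C) C)ᶜ := rfl
    rw [hpre, ← Measure.map_apply hmξs measurableSet_Icc.compl, hlaws,
      withDensity_apply _ measurableSet_Icc.compl]
    calc ∫⁻ u in (Icc (-C) C)ᶜ, ENNReal.ofReal (fs u)
        = ∫⁻ u in (Icc (-C) C)ᶜ, 0 := by
          refine setLIntegral_congr_fun measurableSet_Icc.compl (fun u hu => ?_)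
          simp [hfssupp u hu]
      _ = 0 := lintegral_zero
  -- the integrand
  set F : ℝ → Ω → ℝ := fun r ω =>
    if ms + ξs ω ≤ r ∧ r ≤ mb + ξb ω then (mb + ξb ω) - (ms + ξs ω) else 0 with hF
  have hFmeas : ∀ r, Measurable (F r) := by
    intro r
    apply Measurable.ite
    · have h1 : MeasurableSet {ω | ms + ξs ω ≤ r} :=
        measurableSet_le (measurable_const.add hmξs) measurable_const
      have h2 : MeasurableSet {ω | r ≤ mb + ξb ω} :=
        measurableSet_le measurable_const (measurable_const.add hmξb)
      exact h1.inter h2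
    · exact (measurable_const.add hmξb).sub (measurable_const.add hmξs)
    · exact measurable_const
  have hFbound : ∀ r, ∀ᵐ ω ∂Pr, ‖F r ω‖ ≤ 2 * P := by
    intro r
    filter_upwards [haes, haeb] with ω h1 h2
    obtain ⟨h1a, h1b⟩ := h1
    obtain ⟨h2a, h2b⟩ := h2
    simp only [Real.norm_eq_abs, hF]
    split_ifs with h
    · rw [abs_le]; constructor <;> [linarith [hP]; linarith [hP]]
    · simp [abs_of_nonneg]; linarith
  have hFint : ∀ r, Integrable (F r) Pr := fun r =>
    Integrable.mono' (integrable_const (2 * P)) (hFmeas r).aestronglyMeasurable (hFbound r)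
  -- key one-sided Lipschitz bound
  have key : ∀ p' q' : ℝ, p' ≤ q' → EGFT p' - EGFT q' ≤ 2 * L * P * (q' - p') := by
    intro p' q' hpq
    set G : Ω → ℝ := fun ω =>
      (ξb ⁻¹' Ico (p' - mb) (q' - mb)).indicator (fun _ => 2 * P) ω with hG
    have hGint : Integrable G Pr :=
      (integrable_const (2 * P)).indicator (hmξb measurableSet_Ico)
    have hGω : ∀ ω, G ω = if p' - mb ≤ ξb ω ∧ ξb ω < q' - mb then 2 * P else 0 := by
      intro ω
      by_cases h : ξb ω ∈ Ico (p' - mb) (q' - mb)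
      · rw [hG]
        simp only [Set.indicator_of_mem (Set.mem_preimage.mpr h)]
        rw [if_pos (Set.mem_Ico.mp h)]
      · rw [hG]
        simp only [Set.indicator_of_notMem (fun hc => h (Set.mem_preimage.mp hc))]
        rw [if_neg (fun hc => h (Set.mem_Ico.mpr hc))]
    have hpt : ∀ᵐ ω ∂Pr, F p' ω - F q' ω ≤ G ω := by
      filter_upwards [haes, haeb] with ω h1 h2
      obtain ⟨h1a, h1b⟩ := h1
      obtain ⟨h2a, h2b⟩ := h2
      rw [hGω ω]
      simp only [hF]
      by_cases cp : ms + ξs ω ≤ p' ∧ p' ≤ mb + ξb ω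
      · by_cases cq : ms + ξs ω ≤ q' ∧ q' ≤ mb + ξb ω
        · rw [if_pos cp, if_pos cq]
          split_ifs <;> simp <;> linarith
        · have hbq : mb + ξb ω < q' := by
            by_contra h
            push_neg at h
            exact cq ⟨by linarith [cp.1], h⟩
          have hmem : p' - mb ≤ ξb ω ∧ ξb ω < q' - mb :=
            ⟨by linarith [cp.2], by linarith⟩
          rw [if_pos cp, if_neg cq, if_pos hmem]
          linarith [cp.1, cp.2]
      · by_cases cq : ms + ξs ω ≤ q' ∧ q' ≤ mb + ξb ω
        · rw [if_neg cp, if_pos cq]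
          have : (0:ℝ) ≤ (mb + ξb ω) - (ms + ξs ω) := by linarith [cq.1, cq.2]
          split_ifs <;> linarith
        · rw [if_neg cp, if_neg cq]
          split_ifs <;> linarith
    have hGval : ∫ ω, G ω ∂Pr ≤ 2 * L * P * (q' - p') := by
      rw [hG, integral_indicator_const _ (hmξb measurableSet_Ico)]
      have hmap : Pr (ξb ⁻¹' Ico (p' - mb) (q' - mb))
          = Measure.map ξb Pr (Ico (p' - mb) (q' - mb)) :=
        (Measure.map_apply hmξb measurableSet_Ico).symm
      have hle : Pr (ξb ⁻¹' Ico (p' - mb) (q' - mb)) ≤ ENNReal.ofReal (L * (q' - p')) := by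
        rw [hmap, hlawb, withDensity_apply _ measurableSet_Ico]
        calc ∫⁻ u in Ico (p' - mb) (q' - mb), ENNReal.ofReal (fb u)
            ≤ ∫⁻ _ in Ico (p' - mb) (q' - mb), ENNReal.ofReal L :=
              lintegral_mono fun u => ENNReal.ofReal_le_ofReal (hfbL u)
          _ = ENNReal.ofReal L * volume (Ico (p' - mb) (q' - mb)) := setLIntegral_const _ _
          _ = ENNReal.ofReal L * ENNReal.ofReal (q' - mb - (p' - mb)) := by
              rw [Real.volume_Ico]
          _ = ENNReal.ofReal (L * (q' - p')) := by
              rw [← ENNReal.ofReal_mul hL]; ring_nf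
      have htr : (Pr (ξb ⁻¹' Ico (p' - mb) (q' - mb))).toReal ≤ L * (q' - p') :=
        ENNReal.toReal_le_of_le_ofReal (mul_nonneg hL (by linarith)) hle
      have h2P : (0:ℝ) ≤ 2 * P := by linarith
      calc (Pr (ξb ⁻¹' Ico (p' - mb) (q' - mb))).toReal • (2 * P)
          = 2 * P * (Pr (ξb ⁻¹' Ico (p' - mb) (q' - mb))).toReal := by
            rw [smul_eq_mul]; ring
        _ ≤ 2 * P * (L * (q' - p')) := by
            exact mul_le_mul_of_nonneg_left htr h2P
        _ = 2 * L * P * (q' - p') := by ring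
    calc EGFT p' - EGFT q' = ∫ ω, (F p' ω - F q' ω) ∂Pr := by
          rw [hEGFT p', hEGFT q', ← integral_sub (hFint p') (hFint q')]
      _ ≤ ∫ ω, G ω ∂Pr := integral_mono_ae ((hFint p').sub (hFint q')) hGint hpt
      _ ≤ 2 * L * P * (q' - p') := hGval
  -- grid point construction
  set s0 := ⟪x, θhs⟫_ℝ with hs0_def
  set b0 := ⟪x, θhb⟫_ℝ with hb0_def
  have hsub_s : ⟪x, θhs - θs⟫_ℝ = s0 - ms := by rw [inner_sub_right]
  have hsub_b : ⟪x, θhb - θb⟫_ℝ = b0 - mb := by rw [inner_sub_right]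
  have hsub_sb : ⟪x, θhs - θhb⟫_ℝ = s0 - b0 := by rw [inner_sub_right]
  rw [hsub_s] at hθhs
  rw [hsub_b] at hθhb
  have hs0 := abs_le.mp hθhs
  have hb0 := abs_le.mp hθhb
  have hABP : A * B ≤ P := by rw [hP]; linarith
  -- s0 ∈ [-(P+ε), P+ε], b0 likewise
  have hs0l : -(P + ε) ≤ s0 := by linarith
  have hs0r : s0 ≤ P + ε := by linarith
  have hb0l : -(P + ε) ≤ b0 := by linarith
  have hb0r : b0 ≤ P + ε := by linarith
  set k : ℤ := ⌈(p - s0) / ε⌉ with hk_def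
  set k' : ℤ := ⌊(⟪x, θhs - θhb⟫_ℝ + (k : ℝ) * ε) / ε⌋ with hk'_def
  have hkε_ge : p - s0 ≤ (k : ℝ) * ε := by
    have := Int.le_ceil ((p - s0) / ε)
    calc p - s0 = (p - s0) / ε * ε := (div_mul_cancel₀ _ hε.ne').symm
      _ ≤ (k : ℝ) * ε := mul_le_mul_of_nonneg_right this hε.le
  have hkε_lt : (k : ℝ) * ε < p - s0 + ε := by
    have h1 : (k : ℝ) < (p - s0) / ε + 1 := Int.ceil_lt_add_one _
    have h2 : (k : ℝ) * ε < ((p - s0) / ε + 1) * ε := by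
      exact mul_lt_mul_of_pos_right h1 hε
    calc (k : ℝ) * ε < ((p - s0) / ε + 1) * ε := h2
      _ = p - s0 + ε := by rw [add_mul, div_mul_cancel₀ _ hε.ne', one_mul]
  have hKε : 2 * P + 3 * ε ≤ (K : ℝ) * ε := by
    have h1 : (2 * P / ε : ℝ) ≤ (⌈2 * P / ε⌉₊ : ℝ) := Nat.le_ceil _
    have h2 : (K : ℝ) = (⌈2 * P / ε⌉₊ : ℝ) + 3 := by rw [hK]; push_cast; ring
    have h3 : 2 * P = 2 * P / ε * ε := (div_mul_cancel₀ _ hε.ne').symm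
    have h4 : 2 * P / ε * ε ≤ (⌈2 * P / ε⌉₊ : ℝ) * ε :=
      mul_le_mul_of_nonneg_right h1 hε.le
    rw [h2, add_mul]
    linarith
  have hq_le : s0 + (k : ℝ) * ε < p + ε := by linarith
  have hq_ge : p ≤ s0 + (k : ℝ) * ε := by linarith
  -- bounds on k
  have hk_le : k ≤ (K : ℤ) := by
    have h1 : (k : ℝ) * ε ≤ (K : ℝ) * ε := by linarith
    have h2 : (k : ℝ) ≤ (K : ℝ) := le_of_mul_le_mul_right h1 hε
    exact_mod_cast h2
  have hk_ge : -(K : ℤ) ≤ k := by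
    have h1 : (-(K : ℝ)) * ε ≤ (k : ℝ) * ε := by rw [neg_mul]; linarith
    have h2 : (-(K : ℝ)) ≤ (k : ℝ) := le_of_mul_le_mul_right h1 hε
    exact_mod_cast h2
  -- bounds on k'
  have hk'arg : (⟪x, θhs - θhb⟫_ℝ + (k : ℝ) * ε) = (s0 + (k : ℝ) * ε) - b0 := by
    rw [hsub_sb]; ring
  have hk'_le_r : (k' : ℝ) * ε ≤ (s0 + (k : ℝ) * ε) - b0 := by
    have h1 : (k' : ℝ) ≤ (⟪x, θhs - θhb⟫_ℝ + (k : ℝ) * ε) / ε := Int.floor_le _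
    calc (k' : ℝ) * ε ≤ (⟪x, θhs - θhb⟫_ℝ + (k : ℝ) * ε) / ε * ε :=
          mul_le_mul_of_nonneg_right h1 hε.le
      _ = (s0 + (k : ℝ) * ε) - b0 := by rw [div_mul_cancel₀ _ hε.ne', hk'arg]
  have hk'_gt_r : (s0 + (k : ℝ) * ε) - b0 - ε < (k' : ℝ) * ε := by
    have h1 : (⟪x, θhs - θhb⟫_ℝ + (k : ℝ) * ε) / ε - 1 < (k' : ℝ) := Int.sub_one_lt_floor _
    have h2 : ((⟪x, θhs - θhb⟫_ℝ + (k : ℝ) * ε) / ε - 1) * ε < (k' : ℝ) * ε :=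
      mul_lt_mul_of_pos_right h1 hε
    calc (s0 + (k : ℝ) * ε) - b0 - ε
        = ((⟪x, θhs - θhb⟫_ℝ + (k : ℝ) * ε) / ε - 1) * ε := by
          rw [sub_mul, div_mul_cancel₀ _ hε.ne', one_mul, hk'arg]
      _ < (k' : ℝ) * ε := h2
  have hk'_le : k' ≤ (K : ℤ) := by
    have h1 : (k' : ℝ) * ε ≤ (K : ℝ) * ε := by linarith
    have h2 : (k' : ℝ) ≤ (K : ℝ) := le_of_mul_le_mul_right h1 hε
    exact_mod_cast h2
  have hk'_ge : -(K : ℤ) ≤ k' := by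
    have h1 : (-(K : ℝ)) * ε ≤ (k' : ℝ) * ε := by rw [neg_mul]; linarith
    have h2 : (-(K : ℝ)) ≤ (k' : ℝ) := le_of_mul_le_mul_right h1 hε
    exact_mod_cast h2
  have hmem : (k, k') ∈ Agrid := by
    rw [hAgrid, Finset.mem_filter, Finset.mem_product]
    refine ⟨⟨Finset.mem_Icc.mpr ⟨hk_ge, hk_le⟩, Finset.mem_Icc.mpr ⟨hk'_ge, hk'_le⟩⟩, hk'_def⟩
  have hmax := hkstar_max (k, k') hmem
  have hkey := key p (s0 + (k : ℝ) * ε) hq_ge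
  have hfinal : 2 * L * P * ((s0 + (k : ℝ) * ε) - p) ≤ 2 * L * P * ε := by
    have h2LP : (0:ℝ) ≤ 2 * L * P := by positivity
    exact mul_le_mul_of_nonneg_left (by linarith) h2LP
  simp only [hs0_def] at hmax hkey
  linarith
end

section
/- Let ξ^b be a centered random variable supported in [−C,C] with density bounded by L, let x ∈ ℝ^d, θ^b ∈ ℝ^d with ‖x‖ ≤ B, ‖θ^b‖ ≤ A, set P = C + AB, and let p be drawn uniformly at random from [−P,P], independently of ξ^b. Then for every c ∈ [−P, P], E[2P·1{c ≤ p ≤ xᵀθ^b + ξ^b}] = I(c − xᵀθ^b), where I(δ) = ∫_δ^C D^b(u)du and D^b(u) = P(ξ^b ≥ u). Analogously, for ξ^s centered, supported in [−C,C], and independent of p, and every c ∈ [−P,P], E[2P·1{xᵀθ^s + ξ^s ≤ p ≤ c}] = J(c − xᵀθ^s), where J(δ) = ∫_{−C}^δ F^s(u)du and F^s is the c.d.f. of ξ^s. -/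
open MeasureTheory ProbabilityTheory Set
open scoped InnerProductSpace

private lemma stmt13_volIci (a b v : ℝ) (hav : a ≤ v) :
    volume (Ici v ∩ Ioc a b) = ENNReal.ofReal (b - v) := by
  rcases eq_or_lt_of_le hav with h | h
  · subst h
    have : Ici a ∩ Ioc a b = Ioc a b := inter_eq_right.2 (fun u hu => le_of_lt hu.1)
    rw [this, Real.volume_Ioc]
  · have : Ici v ∩ Ioc a b = Icc v b := by
      ext u
      simp only [mem_inter_iff, mem_Ici, mem_Ioc, mem_Icc]
      exact ⟨fun ⟨h1, _, h3⟩ => ⟨h1, h3⟩, fun ⟨h1, h2⟩ => ⟨h1, lt_of_lt_of_le h h1, h2⟩⟩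
    rw [this, Real.volume_Icc]

private lemma stmt13_swapmeas : ∀ (s : Set (ℝ × ℝ)), MeasurableSet s →
    Measurable (Function.uncurry fun (u v : ℝ) => s.indicator (fun _ => (1:ENNReal)) (u, v)) := by
  intro s hs
  exact (measurable_const.indicator hs).comp measurable_id

private lemma stmt13_helperI (ν : Measure ℝ) [IsProbabilityMeasure ν] (C δ : ℝ)
    (hsupp : ν ((Icc (-C) C)ᶜ) = 0) :
    ∫ u in δ..C, (ν (Ici u)).toReal = (∫⁻ v, ENNReal.ofReal (v - δ) ∂ν).toReal := by
  have hae : ∀ᵐ v ∂ν, v ∈ Icc (-C) C := by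
    rw [ae_iff]; exact hsupp
  have hνm : Measurable fun u => ν (Ici u) :=
    Antitone.measurable (fun u1 u2 h => measure_mono (Ici_subset_Ici.2 h))
  rcases le_or_gt δ C with h | h
  · rw [intervalIntegral.integral_of_le h,
      integral_toReal hνm.aemeasurable (ae_of_all _ fun u => measure_lt_top ν _)]
    congr 1
    have key : ∀ u, ν (Ici u) = ∫⁻ v, ({q : ℝ × ℝ | q.1 ≤ q.2}.indicator (fun _ => (1:ENNReal)) (u, v)) ∂ν := by
      intro u
      have : (fun v => ({q : ℝ × ℝ | q.1 ≤ q.2}.indicator (fun _ => (1:ENNReal)) (u, v)))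
          = (Ici u).indicator (fun _ => (1:ENNReal)) := by
        funext v; simp [Set.indicator_apply]
      rw [this, lintegral_indicator measurableSet_Ici, setLIntegral_one]
    calc ∫⁻ u in Ioc δ C, ν (Ici u)
        = ∫⁻ u in Ioc δ C, ∫⁻ v, ({q : ℝ × ℝ | q.1 ≤ q.2}.indicator (fun _ => (1:ENNReal)) (u, v)) ∂ν := by
          exact lintegral_congr fun u => key u
      _ = ∫⁻ v, (∫⁻ u in Ioc δ C, ({q : ℝ × ℝ | q.1 ≤ q.2}.indicator (fun _ => (1:ENNReal)) (u, v))) ∂ν := by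
          exact lintegral_lintegral_swap ((stmt13_swapmeas _ (measurableSet_le measurable_fst measurable_snd)).aemeasurable)
      _ = ∫⁻ v, ENNReal.ofReal (v - δ) ∂ν := by
          refine lintegral_congr_ae (hae.mono fun v hv => ?_)
          show (∫⁻ u in Ioc δ C, ({q : ℝ × ℝ | q.1 ≤ q.2}.indicator (fun _ => (1:ENNReal)) (u, v))) = ENNReal.ofReal (v - δ)
          have : (fun u => ({q : ℝ × ℝ | q.1 ≤ q.2}.indicator (fun _ => (1:ENNReal)) (u, v)))
              = (Iic v).indicator (fun _ => (1:ENNReal)) := by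
            funext u; simp [Set.indicator_apply]
          rw [this, lintegral_indicator measurableSet_Iic, setLIntegral_one,
            Measure.restrict_apply measurableSet_Iic, inter_comm, Ioc_inter_Iic,
            Real.volume_Ioc, min_eq_right hv.2]
  · rw [intervalIntegral.integral_of_ge h.le]
    have h1 : ∫ u in Ioc C δ, (ν (Ici u)).toReal = 0 := by
      refine integral_eq_zero_of_ae ((ae_restrict_iff' measurableSet_Ioc).2 (ae_of_all _ fun u hu => ?_))
      have : ν (Ici u) = 0 := by
        refine measure_mono_null (fun v hv => ?_) hsupp
        simp only [mem_compl_iff, mem_Icc, not_and, not_le]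
        intro _; exact lt_of_lt_of_le hu.1 hv
      simp [this]
    have h2 : ∫⁻ v, ENNReal.ofReal (v - δ) ∂ν = 0 := by
      rw [← lintegral_zero (μ := ν)]
      refine lintegral_congr_ae (hae.mono fun v hv => ?_)
      simp [ENNReal.ofReal_eq_zero, sub_nonpos, le_of_lt (lt_of_le_of_lt hv.2 h)]
    rw [h1, h2]; simp

private lemma stmt13_helperJ (ν : Measure ℝ) [IsProbabilityMeasure ν] (C δ : ℝ)
    (hsupp : ν ((Icc (-C) C)ᶜ) = 0) (hpt : ν {(-C)} = 0) :
    ∫ u in (-C)..δ, (ν (Iic u)).toReal = (∫⁻ v, ENNReal.ofReal (δ - v) ∂ν).toReal := by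
  have hae : ∀ᵐ v ∂ν, v ∈ Icc (-C) C := by
    rw [ae_iff]; exact hsupp
  have hνm : Measurable fun u => ν (Iic u) :=
    Monotone.measurable (fun u1 u2 h => measure_mono (Iic_subset_Iic.2 h))
  rcases le_or_gt (-C) δ with h | h
  · rw [intervalIntegral.integral_of_le h,
      integral_toReal hνm.aemeasurable (ae_of_all _ fun u => measure_lt_top ν _)]
    congr 1
    have key : ∀ u, ν (Iic u) = ∫⁻ v, ({q : ℝ × ℝ | q.2 ≤ q.1}.indicator (fun _ => (1:ENNReal)) (u, v)) ∂ν := by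
      intro u
      have : (fun v => ({q : ℝ × ℝ | q.2 ≤ q.1}.indicator (fun _ => (1:ENNReal)) (u, v)))
          = (Iic u).indicator (fun _ => (1:ENNReal)) := by
        funext v; simp [Set.indicator_apply]
      rw [this, lintegral_indicator measurableSet_Iic, setLIntegral_one]
    calc ∫⁻ u in Ioc (-C) δ, ν (Iic u)
        = ∫⁻ u in Ioc (-C) δ, ∫⁻ v, ({q : ℝ × ℝ | q.2 ≤ q.1}.indicator (fun _ => (1:ENNReal)) (u, v)) ∂ν := by
          exact lintegral_congr fun u => key u
      _ = ∫⁻ v, (∫⁻ u in Ioc (-C) δ, ({q : ℝ × ℝ | q.2 ≤ q.1}.indicator (fun _ => (1:ENNReal)) (u, v))) ∂ν := by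
          exact lintegral_lintegral_swap ((stmt13_swapmeas _ (measurableSet_le measurable_snd measurable_fst)).aemeasurable)
      _ = ∫⁻ v, ENNReal.ofReal (δ - v) ∂ν := by
          refine lintegral_congr_ae (hae.mono fun v hv => ?_)
          show (∫⁻ u in Ioc (-C) δ, ({q : ℝ × ℝ | q.2 ≤ q.1}.indicator (fun _ => (1:ENNReal)) (u, v))) = ENNReal.ofReal (δ - v)
          have : (fun u => ({q : ℝ × ℝ | q.2 ≤ q.1}.indicator (fun _ => (1:ENNReal)) (u, v)))
              = (Ici v).indicator (fun _ => (1:ENNReal)) := by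
            funext u; simp [Set.indicator_apply]
          rw [this, lintegral_indicator measurableSet_Ici, setLIntegral_one,
            Measure.restrict_apply measurableSet_Ici, stmt13_volIci _ _ _ hv.1]
  · rw [intervalIntegral.integral_of_ge h.le]
    have h1 : ∫ u in Ioc δ (-C), (ν (Iic u)).toReal = 0 := by
      refine integral_eq_zero_of_ae ((ae_restrict_iff' measurableSet_Ioc).2 (ae_of_all _ fun u hu => ?_))
      have : ν (Iic u) = 0 := by
        have hsub : Iic u ⊆ Iio (-C) ∪ {(-C)} := by
          intro v hv
          rcases lt_or_eq_of_le (le_trans hv hu.2) with hlt | heq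
          · exact Or.inl hlt
          · exact Or.inr heq
        refine measure_mono_null hsub ?_
        refine le_antisymm (le_trans (measure_union_le _ _) ?_) (zero_le)
        have : ν (Iio (-C)) = 0 := by
          refine measure_mono_null (fun v hv => ?_) hsupp
          simp only [mem_compl_iff, mem_Icc, not_and, not_le, mem_Iio] at *
          exact fun h' => absurd h' (not_le.2 hv)
        rw [this, hpt]; simp
      simp [this]
    have h2 : ∫⁻ v, ENNReal.ofReal (δ - v) ∂ν = 0 := by
      rw [← lintegral_zero (μ := ν)]
      refine lintegral_congr_ae (hae.mono fun v hv => ?_)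
      simp [ENNReal.ofReal_eq_zero, sub_nonpos, le_of_lt (lt_of_lt_of_le h hv.1)]
    rw [h1, h2]; simp

/-- the identities underlying the Est-Int subroutine. For a uniform price
`p ∼ U([-P,P])` independent of the noise, `E[2P·1{c ≤ p ≤ ⟪x,θb⟫ + ξᵇ}] = I(c − ⟪x,θb⟫)`
and `E[2P·1{⟪x,θs⟫ + ξˢ ≤ p ≤ c}] = J(c − ⟪x,θs⟫)`. -/
theorem stmt_13
    {d : ℕ} (A B C L : ℝ)
    (P : ℝ) (hP : P = C + A * B) (hPpos : 0 < P)
    {Ω : Type*} [MeasurableSpace Ω] (Pr : Measure Ω) [IsProbabilityMeasure Pr]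
    (ξs ξb : Ω → ℝ) (hmξs : Measurable ξs) (hmξb : Measurable ξb)
    (fs fb : ℝ → ℝ)
    (hfs0 : ∀ u, 0 ≤ fs u) (hfb0 : ∀ u, 0 ≤ fb u)
    (hfsL : ∀ u, fs u ≤ L) (hfbL : ∀ u, fb u ≤ L)
    (hfssupp : ∀ u, u ∉ Icc (-C) C → fs u = 0)
    (hfbsupp : ∀ u, u ∉ Icc (-C) C → fb u = 0)
    (hlaws : Measure.map ξs Pr = volume.withDensity (fun u => ENNReal.ofReal (fs u)))
    (hlawb : Measure.map ξb Pr = volume.withDensity (fun u => ENNReal.ofReal (fb u)))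
    (hcents : ∫ ω, ξs ω ∂Pr = 0) (hcentb : ∫ ω, ξb ω ∂Pr = 0)
    (θs θb x : EuclideanSpace ℝ (Fin d))
    (hθs : ‖θs‖ ≤ A) (hθb : ‖θb‖ ≤ A) (hx : ‖x‖ ≤ B)
    (p : Ω → ℝ) (hmp : Measurable p)
    (hplaw : Measure.map p Pr
      = (ENNReal.ofReal (2 * P))⁻¹ • volume.restrict (Icc (-P) P))
    (hindeps : IndepFun p ξs Pr) (hindepb : IndepFun p ξb Pr)
    (Fs Db I J : ℝ → ℝ)
    (hFs : ∀ u, Fs u = (Pr {ω | ξs ω ≤ u}).toReal)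
    (hDb : ∀ u, Db u = (Pr {ω | u ≤ ξb ω}).toReal)
    (hI : ∀ δ, I δ = ∫ u in δ..C, Db u)
    (hJ : ∀ δ, J δ = ∫ u in (-C)..δ, Fs u) :
    ∀ c ∈ Icc (-P) P,
      (∫ ω, 2 * P * (if c ≤ p ω ∧ p ω ≤ ⟪x, θb⟫_ℝ + ξb ω then (1:ℝ) else 0) ∂Pr
          = I (c - ⟪x, θb⟫_ℝ))
      ∧ (∫ ω, 2 * P * (if ⟪x, θs⟫_ℝ + ξs ω ≤ p ω ∧ p ω ≤ c then (1:ℝ) else 0) ∂Pr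
          = J (c - ⟪x, θs⟫_ℝ)) := by
  intro c hc
  obtain ⟨hc1, hc2⟩ := hc
  have h2P : (0:ℝ) < 2 * P := by linarith
  have h2Pne : ENNReal.ofReal (2 * P) ≠ 0 := (ENNReal.ofReal_pos.2 h2P).ne'
  have hbound : ∀ (θ : EuclideanSpace ℝ (Fin d)), ‖θ‖ ≤ A → |⟪x, θ⟫_ℝ| ≤ A * B := by
    intro θ hθ
    calc |⟪x, θ⟫_ℝ| ≤ ‖x‖ * ‖θ‖ := abs_real_inner_le_norm x θ
      _ ≤ B * A := mul_le_mul hx hθ (norm_nonneg θ) ((norm_nonneg x).trans hx)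
      _ = A * B := mul_comm B A
  -- support facts for the two noise laws
  have hsuppb : (Pr.map ξb) ((Icc (-C) C)ᶜ) = 0 := by
    rw [hlawb, withDensity_apply _ measurableSet_Icc.compl]
    have hz : ∀ᵐ v ∂(volume.restrict ((Icc (-C) C)ᶜ)), ENNReal.ofReal (fb v) = 0 :=
      (ae_restrict_iff' measurableSet_Icc.compl).2
        (ae_of_all _ fun v hv => by simp [hfbsupp v hv])
    rw [lintegral_congr_ae hz, lintegral_zero]
  have hsupps : (Pr.map ξs) ((Icc (-C) C)ᶜ) = 0 := by
    rw [hlaws, withDensity_apply _ measurableSet_Icc.compl]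
    have hz : ∀ᵐ v ∂(volume.restrict ((Icc (-C) C)ᶜ)), ENNReal.ofReal (fs v) = 0 :=
      (ae_restrict_iff' measurableSet_Icc.compl).2
        (ae_of_all _ fun v hv => by simp [hfssupp v hv])
    rw [lintegral_congr_ae hz, lintegral_zero]
  have hpts : (Pr.map ξs) {(-C)} = 0 := by
    rw [hlaws, withDensity_apply _ (measurableSet_singleton _),
      Measure.restrict_eq_zero.2 (Real.volume_singleton), lintegral_zero_measure]
  haveI hprobb : IsProbabilityMeasure (Pr.map ξb) := Measure.isProbabilityMeasure_map hmξb.aemeasurable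
  haveI hprobs : IsProbabilityMeasure (Pr.map ξs) := Measure.isProbabilityMeasure_map hmξs.aemeasurable
  have haeb : ∀ᵐ v ∂(Pr.map ξb), v ∈ Icc (-C) C := by rw [ae_iff]; exact hsuppb
  have haes : ∀ᵐ v ∂(Pr.map ξs), v ∈ Icc (-C) C := by rw [ae_iff]; exact hsupps
  constructor
  · -- buyer
    set m := ⟪x, θb⟫_ℝ with hm
    have hmb := abs_le.1 (hbound θb hθb)
    have hSb : MeasurableSet {q : ℝ × ℝ | c ≤ q.2 ∧ q.2 ≤ m + q.1} := by
      have : {q : ℝ × ℝ | c ≤ q.2 ∧ q.2 ≤ m + q.1}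
          = {q : ℝ × ℝ | c ≤ q.2} ∩ {q : ℝ × ℝ | q.2 ≤ m + q.1} := rfl
      rw [this]
      exact (measurableSet_le measurable_const measurable_snd).inter
        (measurableSet_le measurable_snd (measurable_const.add measurable_fst))
    have hEmeas : MeasurableSet {ω | c ≤ p ω ∧ p ω ≤ m + ξb ω} := by
      have : {ω | c ≤ p ω ∧ p ω ≤ m + ξb ω}
          = {ω | c ≤ p ω} ∩ {ω | p ω ≤ m + ξb ω} := rfl
      rw [this]
      exact (measurableSet_le measurable_const hmp).inter
        (measurableSet_le hmp (measurable_const.add hmξb))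
    have step1 : ∫ ω, 2 * P * (if c ≤ p ω ∧ p ω ≤ m + ξb ω then (1:ℝ) else 0) ∂Pr
        = 2 * P * (Pr {ω | c ≤ p ω ∧ p ω ≤ m + ξb ω}).toReal := by
      rw [integral_const_mul]
      congr 1
      have h1 : (fun ω => if c ≤ p ω ∧ p ω ≤ m + ξb ω then (1:ℝ) else 0)
          = Set.indicator {ω | c ≤ p ω ∧ p ω ≤ m + ξb ω} (1 : Ω → ℝ) := by
        funext ω; simp [Set.indicator_apply]
      rw [h1]
      exact integral_indicator_one hEmeas
    have step2 : Pr {ω | c ≤ p ω ∧ p ω ≤ m + ξb ω}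
        = ∫⁻ v, (Pr.map p) (Icc c (m + v)) ∂(Pr.map ξb) := by
      have hprodb : Pr.map (fun ω => (ξb ω, p ω)) = (Pr.map ξb).prod (Pr.map p) :=
        (indepFun_iff_map_prod_eq_prod_map_map hmξb.aemeasurable hmp.aemeasurable).1 hindepb.symm
      have h0 : Pr {ω | c ≤ p ω ∧ p ω ≤ m + ξb ω}
          = Pr.map (fun ω => (ξb ω, p ω)) {q : ℝ × ℝ | c ≤ q.2 ∧ q.2 ≤ m + q.1} := by
        rw [Measure.map_apply (hmξb.prodMk hmp) hSb]; rfl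
      rw [h0, hprodb, Measure.prod_apply hSb]
      rfl
    have step3 : ∀ v, (Pr.map p) (Icc c (m + v))
        = (ENNReal.ofReal (2 * P))⁻¹ * ENNReal.ofReal (min (m + v) P - c) := by
      intro v
      rw [hplaw, Measure.smul_apply, smul_eq_mul,
        Measure.restrict_apply measurableSet_Icc, Icc_inter_Icc,
        sup_eq_left.2 hc1, Real.volume_Icc]
    have step4 : Pr {ω | c ≤ p ω ∧ p ω ≤ m + ξb ω}
        = (ENNReal.ofReal (2 * P))⁻¹
            * ∫⁻ v, ENNReal.ofReal (v - (c - m)) ∂(Pr.map ξb) := by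
      rw [step2]
      rw [lintegral_congr fun v => step3 v,
        lintegral_const_mul' _ _ (ENNReal.inv_ne_top.2 h2Pne)]
      congr 1
      refine lintegral_congr_ae (haeb.mono fun v hv => ?_)
      have hle : m + v ≤ P := by
        have := hv.2; rw [hP]; linarith [hmb.2]
      show ENNReal.ofReal (min (m + v) P - c) = ENNReal.ofReal (v - (c - m))
      rw [min_eq_left hle]
      congr 1; ring
    rw [step1, step4, ENNReal.toReal_mul, ENNReal.toReal_inv,
      ENNReal.toReal_ofReal h2P.le]
    have hDbν : Db = fun u => ((Pr.map ξb) (Ici u)).toReal := by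
      funext u
      rw [hDb, Measure.map_apply hmξb measurableSet_Ici]
      rfl
    rw [hI, hDbν, stmt13_helperI (Pr.map ξb) C (c - m) hsuppb]
    field_simp
  · -- seller
    set m := ⟪x, θs⟫_ℝ with hm
    have hms := abs_le.1 (hbound θs hθs)
    have hSs : MeasurableSet {q : ℝ × ℝ | m + q.1 ≤ q.2 ∧ q.2 ≤ c} := by
      have : {q : ℝ × ℝ | m + q.1 ≤ q.2 ∧ q.2 ≤ c}
          = {q : ℝ × ℝ | m + q.1 ≤ q.2} ∩ {q : ℝ × ℝ | q.2 ≤ c} := rfl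
      rw [this]
      exact (measurableSet_le (measurable_const.add measurable_fst) measurable_snd).inter
        (measurableSet_le measurable_snd measurable_const)
    have hEmeas : MeasurableSet {ω | m + ξs ω ≤ p ω ∧ p ω ≤ c} := by
      have : {ω | m + ξs ω ≤ p ω ∧ p ω ≤ c}
          = {ω | m + ξs ω ≤ p ω} ∩ {ω | p ω ≤ c} := rfl
      rw [this]
      exact (measurableSet_le (measurable_const.add hmξs) hmp).inter
        (measurableSet_le hmp measurable_const)
    have step1 : ∫ ω, 2 * P * (if m + ξs ω ≤ p ω ∧ p ω ≤ c then (1:ℝ) else 0) ∂Pr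
        = 2 * P * (Pr {ω | m + ξs ω ≤ p ω ∧ p ω ≤ c}).toReal := by
      rw [integral_const_mul]
      congr 1
      have h1 : (fun ω => if m + ξs ω ≤ p ω ∧ p ω ≤ c then (1:ℝ) else 0)
          = Set.indicator {ω | m + ξs ω ≤ p ω ∧ p ω ≤ c} (1 : Ω → ℝ) := by
        funext ω; simp [Set.indicator_apply]
      rw [h1]
      exact integral_indicator_one hEmeas
    have step2 : Pr {ω | m + ξs ω ≤ p ω ∧ p ω ≤ c}
        = ∫⁻ v, (Pr.map p) (Icc (m + v) c) ∂(Pr.map ξs) := by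
      have hprods : Pr.map (fun ω => (ξs ω, p ω)) = (Pr.map ξs).prod (Pr.map p) :=
        (indepFun_iff_map_prod_eq_prod_map_map hmξs.aemeasurable hmp.aemeasurable).1 hindeps.symm
      have h0 : Pr {ω | m + ξs ω ≤ p ω ∧ p ω ≤ c}
          = Pr.map (fun ω => (ξs ω, p ω)) {q : ℝ × ℝ | m + q.1 ≤ q.2 ∧ q.2 ≤ c} := by
        rw [Measure.map_apply (hmξs.prodMk hmp) hSs]; rfl
      rw [h0, hprods, Measure.prod_apply hSs]
      rfl
    have step3 : ∀ v, (Pr.map p) (Icc (m + v) c)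
        = (ENNReal.ofReal (2 * P))⁻¹ * ENNReal.ofReal (c - max (m + v) (-P)) := by
      intro v
      rw [hplaw, Measure.smul_apply, smul_eq_mul,
        Measure.restrict_apply measurableSet_Icc, Icc_inter_Icc,
        inf_eq_left.2 hc2, Real.volume_Icc]
    have step4 : Pr {ω | m + ξs ω ≤ p ω ∧ p ω ≤ c}
        = (ENNReal.ofReal (2 * P))⁻¹
            * ∫⁻ v, ENNReal.ofReal ((c - m) - v) ∂(Pr.map ξs) := by
      rw [step2]
      rw [lintegral_congr fun v => step3 v,
        lintegral_const_mul' _ _ (ENNReal.inv_ne_top.2 h2Pne)]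
      congr 1
      refine lintegral_congr_ae (haes.mono fun v hv => ?_)
      have hge : -P ≤ m + v := by
        have := hv.1; rw [hP]; linarith [hms.1]
      show ENNReal.ofReal (c - max (m + v) (-P)) = ENNReal.ofReal ((c - m) - v)
      rw [max_eq_left hge]
      congr 1; ring
    rw [step1, step4, ENNReal.toReal_mul, ENNReal.toReal_inv,
      ENNReal.toReal_ofReal h2P.le]
    have hFsν : Fs = fun u => ((Pr.map ξs) (Iic u)).toReal := by
      funext u
      rw [hFs, Measure.map_apply hmξs measurableSet_Iic]
      rfl
    rw [hJ, hFsν, stmt13_helperJ (Pr.map ξs) C (c - m) hsupps hpts]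
    field_simp
end
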